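/- Let G be a minimally non-(3,4)-colorable graph with girth at least 5, and let C = u_1 u_2 u_3 u_4 u_5 u_6 u_7 be a 7-cycle in G. Then at least one of the following holds: (a) at most six of the vertices u_1, ..., u_7 are 2-vertices, 5p-vertices, 5s-vertices, or 6p-vertices; (b) at least two of the vertices u_1, ..., u_7 are 5s-vertices; (c) after relabeling the cycle by a rotation or reflection, u_1 is a 5s-vertex, u_2, u_4, u_6 are 2-vertices, and u_3, u_5, u_7 are 6p-vertices. -/

import Mathlib

/-- The degree of a vertex: the number of its neighbors. -/
noncomputable def degN {V : Type*} (G : SimpleGraph V) (v : V) : ℕ :=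
  {w | G.Adj v w}.ncard

/-- `c` is a (3,4)-coloring of `G`: every vertex gets value 3 or 4, and every
vertex with value `i` has at most `i` neighbors with value `i`. -/
def IsColoring34 {V : Type*} (G : SimpleGraph V) (c : V → ℕ) : Prop :=
  (∀ v, c v = 3 ∨ c v = 4) ∧ ∀ v, {w | G.Adj v w ∧ c w = c v}.ncard ≤ c v

/-- `G` is (3,4)-colorable. -/
def Colorable34 {V : Type*} (G : SimpleGraph V) : Prop :=
  ∃ c, IsColoring34 G c

/-- The graph `G − v` obtained by deleting the vertex `v` and its incident edges
(keeping `v` as an isolated vertex, which does not affect (3,4)-colorability). -/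
def deleteVert {V : Type*} (G : SimpleGraph V) (v : V) : SimpleGraph V where
  Adj a b := G.Adj a b ∧ a ≠ v ∧ b ≠ v
  symm := ⟨fun _ _ ⟨h, ha, hb⟩ => ⟨h.symm, hb, ha⟩⟩
  loopless := ⟨fun a ⟨h, _, _⟩ => G.loopless.irrefl a h⟩

/-- `G` is minimally non-(3,4)-colorable. -/
def MinNonColorable34 {V : Type*} (G : SimpleGraph V) : Prop :=
  ¬ Colorable34 G ∧ (∀ v, Colorable34 (deleteVert G v)) ∧
    ∀ e ∈ G.edgeSet, Colorable34 (G.deleteEdges {e})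

/-- `u` is `i`-saturated under the coloring `c` of the graph `G`. -/
def Saturated34 {V : Type*} (G : SimpleGraph V) (c : V → ℕ) (i : ℕ) (u : V) : Prop :=
  c u = i ∧ {w | G.Adj u w ∧ c w = i}.ncard = i

/-- `u` can be recolored: changing the color of `u` to the other color
(`7 - c u` swaps 3 and 4) again yields a (3,4)-coloring of `G`. -/
def Recolorable34 {V : Type*} [DecidableEq V] (G : SimpleGraph V) (c : V → ℕ) (u : V) : Prop :=
  IsColoring34 G (Function.update c u (7 - c u))

/-- The number of 3^+-neighbors of `x` in `G` (neighbors of degree at least 3). -/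
noncomputable def tpn {V : Type*} (G : SimpleGraph V) (x : V) : ℕ :=
  {w | G.Adj x w ∧ 3 ≤ degN G w}.ncard

/-- A 5p-vertex (poor 5-vertex): degree 5 with exactly one 3^+-neighbor. -/
def Is5p {V : Type*} (G : SimpleGraph V) (x : V) : Prop := degN G x = 5 ∧ tpn G x = 1

/-- A 5s-vertex (semi-poor 5-vertex): degree 5 with exactly two 3^+-neighbors. -/
def Is5s {V : Type*} (G : SimpleGraph V) (x : V) : Prop := degN G x = 5 ∧ tpn G x = 2

/-- A 6p-vertex (poor 6-vertex): degree 6 with exactly one 3^+-neighbor. -/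
def Is6p {V : Type*} (G : SimpleGraph V) (x : V) : Prop := degN G x = 6 ∧ tpn G x = 1

/-- `G` has girth at least 5: no 3-cycles and no 4-cycles. -/
def GirthAtLeast5 {V : Type*} (G : SimpleGraph V) : Prop :=
  (∀ a b c : V, G.Adj a b → G.Adj b c → ¬ G.Adj c a) ∧
  (∀ a b c d : V, a ≠ c → b ≠ d →
    G.Adj a b → G.Adj b c → G.Adj c d → ¬ G.Adj d a)

/- ################ infrastructure ################ -/
section Infra
variable {V : Type*} [Fintype V] {G : SimpleGraph V} {c : V → ℕ} {i : ℕ} {v a b x y z u : V}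

lemma le_of_subset' {S T : Set V} (h : S ⊆ T) {n : ℕ} (hT : T.ncard ≤ n) : S.ncard ≤ n :=
  le_trans (Set.ncard_le_ncard h (Set.toFinite T)) hT

lemma cnt_le_deg (G : SimpleGraph V) (c : V → ℕ) (i : ℕ) (v : V) :
    {w | G.Adj v w ∧ c w = i}.ncard ≤ degN G v :=
  Set.ncard_le_ncard (fun w hw => hw.1) (Set.toFinite _)

lemma cnt_partition (hc : ∀ w, c w = 3 ∨ c w = 4) (G : SimpleGraph V) (v : V) :
    {w | G.Adj v w ∧ c w = 3}.ncard + {w | G.Adj v w ∧ c w = 4}.ncard = degN G v := by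
  rw [← Set.ncard_union_eq ?hd (Set.toFinite _) (Set.toFinite _)]
  · congr 1
    ext w
    simp only [Set.mem_union, Set.mem_setOf_eq, degN]
    constructor
    · rintro (⟨h, _⟩ | ⟨h, _⟩) <;> exact h
    · intro h
      rcases hc w with h3 | h4
      · exact Or.inl ⟨h, h3⟩
      · exact Or.inr ⟨h, h4⟩
  case hd =>
    rw [Set.disjoint_left]
    rintro w ⟨_, h3⟩ ⟨_, h4⟩
    omega

lemma all_nbrs (h : degN G v ≤ {w | G.Adj v w ∧ c w = i}.ncard) :
    ∀ w, G.Adj v w → c w = i := by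
  have hs : {w | G.Adj v w ∧ c w = i} = {w | G.Adj v w} :=
    Set.eq_of_subset_of_ncard_le (fun w hw => hw.1) h (Set.toFinite _)
  intro w hw
  have : w ∈ {w | G.Adj v w ∧ c w = i} := hs ▸ hw
  exact this.2

lemma set_eq_single {S : Set V} (ha : a ∈ S) (h : S.ncard ≤ 1) : S = {a} :=
  (Set.eq_of_subset_of_ncard_le (Set.singleton_subset_iff.mpr ha)
    (by simpa using h) (Set.toFinite _)).symm

lemma set_eq_pair {S : Set V} (ha : a ∈ S) (hb : b ∈ S) (hab : a ≠ b) (h : S.ncard ≤ 2) :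
    S = {a, b} :=
  (Set.eq_of_subset_of_ncard_le (by simp [Set.insert_subset_iff, ha, hb])
    (by rw [Set.ncard_pair hab]; exact h) (Set.toFinite _)).symm

lemma two_nbrs (h2 : degN G v = 2) (ha : G.Adj v a) (hb : G.Adj v b) (hab : a ≠ b) :
    ∀ w, G.Adj v w → w = a ∨ w = b := by
  have hs : {w | G.Adj v w} = {a, b} := set_eq_pair ha hb hab (le_of_eq h2)
  intro w hw
  have : w ∈ ({a, b} : Set V) := hs ▸ hw
  simpa using this

lemma tpn_one (h : tpn G x = 1) :
    ∃ z, G.Adj x z ∧ 3 ≤ degN G z ∧ ∀ w, G.Adj x w → w = z ∨ degN G w ≤ 2 := by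
  obtain ⟨z, hz⟩ := Set.ncard_eq_one.mp h
  have hzm : z ∈ {w | G.Adj x w ∧ 3 ≤ degN G w} := hz ▸ rfl
  refine ⟨z, hzm.1, hzm.2, fun w hw => ?_⟩
  by_cases h3 : 3 ≤ degN G w
  · left
    have : w ∈ {w | G.Adj x w ∧ 3 ≤ degN G w} := ⟨hw, h3⟩
    rw [hz] at this; simpa using this
  · right; omega

lemma tpn_one' (h : tpn G x = 1) (hz : G.Adj x z) (h3 : 3 ≤ degN G z) :
    ∀ w, G.Adj x w → w = z ∨ degN G w ≤ 2 := by
  have hs : {w | G.Adj x w ∧ 3 ≤ degN G w} = {z} := set_eq_single ⟨hz, h3⟩ (le_of_eq h)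
  intro w hw
  by_cases hd : 3 ≤ degN G w
  · left
    have : w ∈ {w | G.Adj x w ∧ 3 ≤ degN G w} := ⟨hw, hd⟩
    rw [hs] at this; simpa using this
  · right; omega

lemma tpn_two (h : tpn G x = 2) (hz : G.Adj x z) (h3 : 3 ≤ degN G z) :
    ∃ z', z' ≠ z ∧ G.Adj x z' ∧ 3 ≤ degN G z' ∧
      ∀ w, G.Adj x w → w = z ∨ w = z' ∨ degN G w ≤ 2 := by
  obtain ⟨a, b, hab, hS⟩ := Set.ncard_eq_two.mp h
  have hzm : z ∈ ({a, b} : Set V) := hS ▸ (⟨hz, h3⟩ : z ∈ {w | G.Adj x w ∧ 3 ≤ degN G w})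
  have key : ∀ w, G.Adj x w → w ∈ ({a,b} : Set V) ∨ degN G w ≤ 2 := by
    intro w hw
    by_cases hd : 3 ≤ degN G w
    · exact Or.inl (hS ▸ (⟨hw, hd⟩ : w ∈ {w | G.Adj x w ∧ 3 ≤ degN G w}))
    · right; omega
  simp only [Set.mem_insert_iff, Set.mem_singleton_iff] at hzm
  rcases hzm with rfl | rfl
  · have hbm : b ∈ {w | G.Adj x w ∧ 3 ≤ degN G w} := hS ▸ (by simp)
    refine ⟨b, hab.symm, hbm.1, hbm.2, fun w hw => ?_⟩
    rcases key w hw with hm | hm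
    · simp only [Set.mem_insert_iff, Set.mem_singleton_iff] at hm; tauto
    · tauto
  · have ham : a ∈ {w | G.Adj x w ∧ 3 ≤ degN G w} := hS ▸ (by simp)
    refine ⟨a, hab, ham.1, ham.2, fun w hw => ?_⟩
    rcases key w hw with hm | hm
    · simp only [Set.mem_insert_iff, Set.mem_singleton_iff] at hm; tauto
    · tauto

lemma delV_adj : (deleteVert G u).Adj a b ↔ G.Adj a b ∧ a ≠ u ∧ b ≠ u := Iff.rfl

lemma delV_nbrs (hvu : v ≠ u) :
    {w | (deleteVert G u).Adj v w} = {w | G.Adj v w} \ {u} := by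
  ext w
  simp only [Set.mem_setOf_eq, Set.mem_diff, Set.mem_singleton_iff, delV_adj]
  tauto

lemma deg_delV (hadj : G.Adj v u) : degN (deleteVert G u) v = degN G v - 1 := by
  have h := Set.ncard_diff_singleton_of_mem (show u ∈ {w | G.Adj v w} from hadj)
  rw [degN, delV_nbrs (G.ne_of_adj hadj), h]
  rfl

lemma deg_delV_nonadj (hvu : v ≠ u) (hadj : ¬ G.Adj v u) :
    degN (deleteVert G u) v = degN G v := by
  rw [degN, delV_nbrs hvu, degN]
  congr 1
  ext w
  simp only [Set.mem_diff, Set.mem_setOf_eq, Set.mem_singleton_iff]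
  constructor
  · tauto
  · intro h; exact ⟨h, fun hw => hadj (hw ▸ h)⟩

lemma delE_adj' : (G.deleteEdges {s(x,y)}).Adj a b ↔
    G.Adj a b ∧ ¬(a = x ∧ b = y) ∧ ¬(a = y ∧ b = x) := by
  rw [SimpleGraph.deleteEdges_adj]
  simp only [Set.mem_singleton_iff, Sym2.eq_iff]
  tauto

lemma delE_nbrs (hxy : G.Adj x y) :
    {w | (G.deleteEdges {s(x,y)}).Adj x w} = {w | G.Adj x w} \ {y} := by
  have hne : x ≠ y := G.ne_of_adj hxy
  ext w
  rw [Set.mem_setOf_eq, delE_adj']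
  rw [Set.mem_diff, Set.mem_setOf_eq, Set.mem_singleton_iff]
  constructor
  · rintro ⟨h, h1, _⟩
    exact ⟨h, fun hw => h1 ⟨rfl, hw⟩⟩
  · rintro ⟨h, hw⟩
    exact ⟨h, fun hh => hw hh.2, fun hh => hne hh.1⟩

lemma deg_delE (hxy : G.Adj x y) :
    degN (G.deleteEdges {s(x,y)}) x = degN G x - 1 := by
  have h := Set.ncard_diff_singleton_of_mem (show y ∈ {w | G.Adj x w} from hxy)
  rw [degN, delE_nbrs hxy, h]
  rfl

lemma delE_nbrs_other (ht : v ≠ x) (ht' : v ≠ y) :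
    {w | (G.deleteEdges {s(x,y)}).Adj v w} = {w | G.Adj v w} := by
  ext w
  simp only [Set.mem_setOf_eq, delE_adj']
  constructor
  · tauto
  · intro h
    exact ⟨h, fun hh => ht hh.1, fun hh => ht' hh.1⟩

lemma bound_by_deg3 {c' : V → ℕ} (hc' : ∀ w, c' w = 3 ∨ c' w = 4) (t : V)
    (h : degN G t ≤ 3) : {w | G.Adj t w ∧ c' w = c' t}.ncard ≤ c' t := by
  have := cnt_le_deg G c' (c' t) t
  rcases hc' t with h3 | h4 <;> omega

lemma ncard_insert_diff_le {S : Set V} (hx : x ∈ S) (y : V) :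
    (insert y (S \ {x})).ncard ≤ S.ncard := by
  have h1 := Set.ncard_insert_le y (S \ {x})
  have h2 := Set.ncard_diff_singleton_of_mem hx
  have h3 : 0 < S.ncard := (Set.ncard_pos (Set.toFinite S)).mpr ⟨x, hx⟩
  omega

end Infra

section StructLemmas
variable {V : Type*} [Fintype V] {G : SimpleGraph V} {x y v : V} {c : V → ℕ}

lemma not_delE_adj : ¬ (G.deleteEdges {s(x,y)}).Adj x y :=
  fun h => (delE_adj'.mp h).2.1 ⟨rfl, rfl⟩

lemma subset_delE {t : V} (P : V → Prop) (htx : t ≠ x) (hty : t ≠ y) :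
    {w | G.Adj t w ∧ P w} ⊆ {w | (G.deleteEdges {s(x,y)}).Adj t w ∧ P w} := by
  rintro w ⟨h, hp⟩
  exact ⟨delE_adj'.mpr ⟨h, fun hh => htx hh.1, fun hh => hty hh.1⟩, hp⟩

/-- Lemma A: no edge joins two vertices of degree ≤ 3. -/
lemma no_low_edge (hG : MinNonColorable34 G)
    (hu : degN G x ≤ 3) (hv : degN G y ≤ 3) (h : G.Adj x y) : False := by
  obtain ⟨c, hc3, hcnt⟩ := hG.2.2 s(x,y) ((SimpleGraph.mem_edgeSet G).mpr h)
  apply hG.1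
  refine ⟨c, hc3, fun t => ?_⟩
  by_cases htx : t = x
  · subst htx; exact bound_by_deg3 hc3 t hu
  by_cases hty : t = y
  · subst hty; exact bound_by_deg3 hc3 t hv
  · exact le_of_subset' (subset_delE _ htx hty) (hcnt t)

lemma coloring_of_delE_ne (hxy : G.Adj x y)
    (hc : IsColoring34 (G.deleteEdges {s(x,y)}) c) (hne : c x ≠ c y) :
    IsColoring34 G c := by
  obtain ⟨hc3, hcnt⟩ := hc
  refine ⟨hc3, fun t => ?_⟩
  by_cases htx : t = x
  · subst htx
    refine le_of_subset' ?_ (hcnt t)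
    rintro w ⟨hadj, hcw⟩
    refine ⟨delE_adj'.mpr ⟨hadj, ?_, ?_⟩, hcw⟩
    · rintro ⟨-, rfl⟩; exact hne hcw.symm
    · rintro ⟨h1, -⟩; exact G.ne_of_adj hxy h1
  by_cases hty : t = y
  · subst hty
    refine le_of_subset' ?_ (hcnt t)
    rintro w ⟨hadj, hcw⟩
    refine ⟨delE_adj'.mpr ⟨hadj, ?_, ?_⟩, hcw⟩
    · rintro ⟨h1, -⟩; exact G.ne_of_adj hxy h1.symm
    · rintro ⟨-, rfl⟩; exact hne hcw
  · exact le_of_subset' (subset_delE _ htx hty) (hcnt t)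

/-- In a deleted-edge coloring with `c x = c y`, one endpoint is saturated. -/
lemma delE_sat (hxy : G.Adj x y) (hnc : ¬ Colorable34 G)
    (hc : IsColoring34 (G.deleteEdges {s(x,y)}) c) (hcc : c x = c y) :
    {w | (G.deleteEdges {s(x,y)}).Adj x w ∧ c w = c x}.ncard = c x ∨
    {w | (G.deleteEdges {s(x,y)}).Adj y w ∧ c w = c y}.ncard = c y := by
  obtain ⟨hc3, hcnt⟩ := hc
  by_contra hcon
  push_neg at hcon
  obtain ⟨h1, h2⟩ := hcon
  have h1' : {w | (G.deleteEdges {s(x,y)}).Adj x w ∧ c w = c x}.ncard + 1 ≤ c x := by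
    have := hcnt x; omega
  have h2' : {w | (G.deleteEdges {s(x,y)}).Adj y w ∧ c w = c y}.ncard + 1 ≤ c y := by
    have := hcnt y; omega
  apply hnc
  refine ⟨c, hc3, fun t => ?_⟩
  by_cases htx : t = x
  · subst htx
    refine le_trans (le_of_subset' (S := {w | G.Adj t w ∧ c w = c t})
      (T := insert y {w | (G.deleteEdges {s(t,y)}).Adj t w ∧ c w = c t}) ?_
      (Set.ncard_insert_le _ _)) ?_
    · rintro w ⟨hadj, hcw⟩
      by_cases hwy : w = y
      · exact Or.inl hwy
      · exact Or.inr ⟨delE_adj'.mpr ⟨hadj, fun hh => hwy hh.2, fun hh =>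
          G.ne_of_adj hxy hh.1⟩, hcw⟩
    · exact h1'
  by_cases hty : t = y
  · subst hty
    refine le_trans (le_of_subset' (S := {w | G.Adj t w ∧ c w = c t})
      (T := insert x {w | (G.deleteEdges {s(x,t)}).Adj t w ∧ c w = c t}) ?_
      (Set.ncard_insert_le _ _)) ?_
    · rintro w ⟨hadj, hcw⟩
      by_cases hwx : w = x
      · exact Or.inl hwx
      · exact Or.inr ⟨delE_adj'.mpr ⟨hadj, fun hh =>
          G.ne_of_adj hxy hh.1.symm, fun hh => hwx hh.2⟩, hcw⟩
    · exact h2'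
  · exact le_of_subset' (subset_delE _ htx hty) (hcnt t)

end StructLemmas
section PoorPoor
variable {V : Type*} [Fintype V] {G : SimpleGraph V} {x y : V} {c : V → ℕ}

/-- Flip a saturated poor vertex whose only 3⁺-neighbor is across the deleted edge. -/
lemma poor_flip (hnc : ¬ Colorable34 G) (hxy : G.Adj x y)
    (hnbx : ∀ w, G.Adj x w → w = y ∨ degN G w ≤ 2) (hdx : degN G x ≤ 6)
    (hc : IsColoring34 (G.deleteEdges {s(x,y)}) c) (hcc : c x = c y)
    (hsat : {w | (G.deleteEdges {s(x,y)}).Adj x w ∧ c w = c x}.ncard = c x) : False := by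
  classical
  obtain ⟨hc3, hcnt⟩ := hc
  have hne : x ≠ y := G.ne_of_adj hxy
  set c' : V → ℕ := fun w => if w = x then 7 - c x else c w with hc'
  have hc'x : c' x = 7 - c x := by simp [hc']
  have hc'o : ∀ w, w ≠ x → c' w = c w := by intro w hw; simp [hc', hw]
  have hc3x := hc3 x
  have hc'3 : ∀ w, c' w = 3 ∨ c' w = 4 := by
    intro w
    by_cases hw : w = x
    · subst hw; rw [hc'x]; omega
    · rw [hc'o w hw]; exact hc3 w
  -- count of (c x)-colored G-neighbors of x is ≥ c x + 1
  have hbig : c x + 1 ≤ {w | G.Adj x w ∧ c w = c x}.ncard := by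
    have hsub : insert y {w | (G.deleteEdges {s(x,y)}).Adj x w ∧ c w = c x}
        ⊆ {w | G.Adj x w ∧ c w = c x} := by
      rintro w (rfl | ⟨hadj, hcw⟩)
      · exact ⟨hxy, hcc.symm⟩
      · exact ⟨(delE_adj'.mp hadj).1, hcw⟩
    have hins : (insert y {w | (G.deleteEdges {s(x,y)}).Adj x w ∧ c w = c x}).ncard
        = {w | (G.deleteEdges {s(x,y)}).Adj x w ∧ c w = c x}.ncard + 1 :=
      Set.ncard_insert_of_notMem (fun hmem => not_delE_adj hmem.1) (Set.toFinite _)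
    have := Set.ncard_le_ncard hsub (Set.toFinite _)
    omega
  have hpart := cnt_partition hc3 G x
  apply hnc
  refine ⟨c', hc'3, fun t => ?_⟩
  by_cases htx : t = x
  · subst htx
    rw [hc'x]
    have hsub : {w | G.Adj t w ∧ c' w = 7 - c t} ⊆ {w | G.Adj t w ∧ c w = 7 - c t} := by
      rintro w ⟨hadj, hcw⟩
      rw [hc'o w (G.ne_of_adj hadj).symm] at hcw
      exact ⟨hadj, hcw⟩
    have hb := Set.ncard_le_ncard hsub (Set.toFinite _)
    rcases hc3x with h3 | h4
    · rw [h3] at hbig hb ⊢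
      norm_num at hb ⊢
      omega
    · rw [h4] at hbig hb ⊢
      norm_num at hb ⊢
      omega
  by_cases hty : t = y
  · subst hty
    rw [hc'o t hne.symm]
    refine le_of_subset' ?_ (hcnt t)
    rintro w ⟨hadj, hcw⟩
    have hwx : w ≠ x := by
      intro hw; subst hw
      rw [hc'x] at hcw
      omega
    rw [hc'o w hwx] at hcw
    exact ⟨delE_adj'.mpr ⟨hadj, fun hh => hne hh.1.symm, fun hh => hwx hh.2⟩, hcw⟩
  · by_cases hdt : degN G t ≤ 3
    · exact bound_by_deg3 hc'3 t hdt
    · have hnadj : ¬ G.Adj t x := by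
        intro hadj
        rcases hnbx t hadj.symm with h | h
        · exact hty h
        · omega
      rw [hc'o t htx]
      refine le_of_subset' ?_ (hcnt t)
      rintro w ⟨hadj, hcw⟩
      have hwx : w ≠ x := fun hw => hnadj (hw ▸ hadj)
      rw [hc'o w hwx] at hcw
      exact ⟨delE_adj'.mpr ⟨hadj, fun hh => htx hh.1, fun hh => hty hh.1⟩, hcw⟩

/-- Lemma B: no two adjacent poor vertices. -/
lemma no_poor_poor (hG : MinNonColorable34 G)
    (hdx : degN G x ≤ 6) (htx : tpn G x = 1) (h3x : 3 ≤ degN G x)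
    (hdy : degN G y ≤ 6) (hty : tpn G y = 1) (h3y : 3 ≤ degN G y)
    (hxy : G.Adj x y) : False := by
  obtain ⟨c, hc⟩ := hG.2.2 s(x,y) ((SimpleGraph.mem_edgeSet G).mpr hxy)
  have hnbx : ∀ w, G.Adj x w → w = y ∨ degN G w ≤ 2 := tpn_one' htx hxy h3y
  have hnby : ∀ w, G.Adj y w → w = x ∨ degN G w ≤ 2 := tpn_one' hty hxy.symm h3x
  by_cases hcc : c x = c y
  · rcases delE_sat hxy hG.1 hc hcc with hs | hs
    · exact poor_flip hG.1 hxy hnbx hdx hc hcc hs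
    · have hswap : s(x,y) = s(y,x) := Sym2.eq_swap
      rw [hswap] at hc hs
      exact poor_flip hG.1 hxy.symm hnby hdy hc hcc.symm hs
  · exact hG.1 ⟨c, coloring_of_delE_ne hxy hc hcc⟩

end PoorPoor
section FiveP
variable {V : Type*} [Fintype V] {G : SimpleGraph V} {x y : V} {c : V → ℕ}

/-- Lemma E: no 5p-vertex is adjacent to a vertex of degree 5. -/
lemma no_5p_adj_deg5 (hG : MinNonColorable34 G)
    (hx5 : degN G x = 5) (htx : tpn G x = 1) (hy5 : degN G y = 5)
    (hxy : G.Adj x y) : False := by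
  classical
  have h3y : 3 ≤ degN G y := by omega
  have hnbx : ∀ w, G.Adj x w → w = y ∨ degN G w ≤ 2 := tpn_one' htx hxy h3y
  have hne : x ≠ y := G.ne_of_adj hxy
  obtain ⟨c, hc⟩ := hG.2.2 s(x,y) ((SimpleGraph.mem_edgeSet G).mpr hxy)
  by_cases hcc : c x = c y
  swap
  · exact hG.1 ⟨c, coloring_of_delE_ne hxy hc hcc⟩
  obtain ⟨hc3, hcnt⟩ := hc
  rcases hc3 x with hcx3 | hcx4
  · -- c x = c y = 3 : recolor x to 4
    set c' : V → ℕ := fun w => if w = x then 4 else c w with hc'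
    have hc'x : c' x = 4 := by simp [hc']
    have hc'o : ∀ w, w ≠ x → c' w = c w := by intro w hw; simp [hc', hw]
    have hc'3 : ∀ w, c' w = 3 ∨ c' w = 4 := by
      intro w
      by_cases hw : w = x
      · subst hw; rw [hc'x]; omega
      · rw [hc'o w hw]; exact hc3 w
    apply hG.1
    refine ⟨c', hc'3, fun t => ?_⟩
    by_cases htxx : t = x
    · subst htxx
      rw [hc'x]
      have hd := Set.ncard_diff_singleton_of_mem (show y ∈ {w | G.Adj t w} from hxy)
      refine le_of_subset' (T := {w | G.Adj t w} \ {y}) ?_ ?_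
      · rintro w ⟨hadj, hcw⟩
        rw [hc'o w (G.ne_of_adj hadj).symm] at hcw
        refine ⟨hadj, fun hwy => ?_⟩
        rw [Set.mem_singleton_iff] at hwy
        subst hwy
        rw [← hcc, hcx3] at hcw
        omega
      · rw [hd]
        have h5 : {w | G.Adj t w}.ncard = 5 := hx5
        omega
    by_cases hty : t = y
    · subst hty
      rw [hc'o t hne.symm]
      refine le_of_subset' ?_ (hcnt t)
      rintro w ⟨hadj, hcw⟩
      have hwx : w ≠ x := by
        intro hw; subst hw
        rw [hc'x] at hcw
        rw [← hcc, hcx3] at hcw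
        omega
      rw [hc'o w hwx] at hcw
      exact ⟨delE_adj'.mpr ⟨hadj, fun hh => hne hh.1.symm, fun hh => hwx hh.2⟩, hcw⟩
    · by_cases hdt : degN G t ≤ 3
      · exact bound_by_deg3 hc'3 t hdt
      · have hnadj : ¬ G.Adj t x := by
          intro hadj
          rcases hnbx t hadj.symm with h | h
          · exact hty h
          · omega
        rw [hc'o t htxx]
        refine le_of_subset' ?_ (hcnt t)
        rintro w ⟨hadj, hcw⟩
        have hwx : w ≠ x := fun hw => hnadj (hw ▸ hadj)
        rw [hc'o w hwx] at hcw
        exact ⟨delE_adj'.mpr ⟨hadj, fun hh => htxx hh.1, fun hh => hty hh.1⟩, hcw⟩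
  · -- c x = c y = 4
    have hcy4 : c y = 4 := hcc ▸ hcx4
    rcases delE_sat hxy hG.1 ⟨hc3, hcnt⟩ hcc with hs | hs
    · -- x is saturated: all its other neighbors are colored 4; recolor x to 3
      have hall : ∀ w, (G.deleteEdges {s(x,y)}).Adj x w → c w = c x := by
        apply all_nbrs
        rw [hs, deg_delE hxy, hx5, hcx4]
      set c' : V → ℕ := fun w => if w = x then 3 else c w with hc'
      have hc'x : c' x = 3 := by simp [hc']
      have hc'o : ∀ w, w ≠ x → c' w = c w := by intro w hw; simp [hc', hw]
      have hc'3 : ∀ w, c' w = 3 ∨ c' w = 4 := by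
        intro w
        by_cases hw : w = x
        · subst hw; rw [hc'x]; omega
        · rw [hc'o w hw]; exact hc3 w
      apply hG.1
      refine ⟨c', hc'3, fun t => ?_⟩
      by_cases htxx : t = x
      · subst htxx
        rw [hc'x]
        refine le_of_subset' (T := (∅ : Set V)) ?_ (by simp)
        rintro w ⟨hadj, hcw⟩
        exfalso
        have hwx : w ≠ t := (G.ne_of_adj hadj).symm
        rw [hc'o w hwx] at hcw
        by_cases hwy : w = y
        · subst hwy; omega
        · have := hall w (delE_adj'.mpr ⟨hadj, fun hh => hwy hh.2, fun hh => hne hh.1⟩)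
          omega
      by_cases hty : t = y
      · subst hty
        rw [hc'o t hne.symm]
        refine le_of_subset' ?_ (hcnt t)
        rintro w ⟨hadj, hcw⟩
        have hwx : w ≠ x := by
          intro hw; subst hw
          rw [hc'x] at hcw
          omega
        rw [hc'o w hwx] at hcw
        exact ⟨delE_adj'.mpr ⟨hadj, fun hh => hne hh.1.symm, fun hh => hwx hh.2⟩, hcw⟩
      · by_cases hdt : degN G t ≤ 3
        · exact bound_by_deg3 hc'3 t hdt
        · have hnadj : ¬ G.Adj t x := by
            intro hadj
            rcases hnbx t hadj.symm with h | h
            · exact hty h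
            · omega
          rw [hc'o t htxx]
          refine le_of_subset' ?_ (hcnt t)
          rintro w ⟨hadj, hcw⟩
          have hwx : w ≠ x := fun hw => hnadj (hw ▸ hadj)
          rw [hc'o w hwx] at hcw
          exact ⟨delE_adj'.mpr ⟨hadj, fun hh => htxx hh.1, fun hh => hty hh.1⟩, hcw⟩
    · -- y is saturated: all its other neighbors are colored 4; recolor y to 3
      rw [Sym2.eq_swap (a := x)] at hs hcnt
      have hall : ∀ w, (G.deleteEdges {s(y,x)}).Adj y w → c w = c y := by
        apply all_nbrs
        rw [hs, deg_delE hxy.symm, hy5, hcy4]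
      set c' : V → ℕ := fun w => if w = y then 3 else c w with hc'
      have hc'y : c' y = 3 := by simp [hc']
      have hc'o : ∀ w, w ≠ y → c' w = c w := by intro w hw; simp [hc', hw]
      have hc'3 : ∀ w, c' w = 3 ∨ c' w = 4 := by
        intro w
        by_cases hw : w = y
        · subst hw; rw [hc'y]; omega
        · rw [hc'o w hw]; exact hc3 w
      apply hG.1
      refine ⟨c', hc'3, fun t => ?_⟩
      by_cases hty : t = y
      · subst hty
        rw [hc'y]
        refine le_of_subset' (T := (∅ : Set V)) ?_ (by simp)
        rintro w ⟨hadj, hcw⟩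
        exfalso
        have hwy : w ≠ t := (G.ne_of_adj hadj).symm
        rw [hc'o w hwy] at hcw
        by_cases hwx : w = x
        · subst hwx; omega
        · have := hall w (delE_adj'.mpr ⟨hadj, fun hh => hwx hh.2, fun hh => hne hh.1.symm⟩)
          omega
      by_cases htxx : t = x
      · subst htxx
        rw [hc'o t hne]
        refine le_of_subset' ?_ (hcnt t)
        rintro w ⟨hadj, hcw⟩
        have hwy : w ≠ y := by
          intro hw; subst hw
          rw [hc'y] at hcw
          omega
        rw [hc'o w hwy] at hcw
        exact ⟨delE_adj'.mpr ⟨hadj, fun hh => hne hh.1, fun hh => hwy hh.2⟩, hcw⟩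
      · by_cases hdt : degN G t ≤ 3
        · exact bound_by_deg3 hc'3 t hdt
        · rw [hc'o t hty]
          refine le_of_subset' ?_ (hcnt t)
          rintro w ⟨hadj, hcw⟩
          by_cases hwy : w = y
          · exfalso
            subst hwy
            rw [hc'y] at hcw
            have := hall t (delE_adj'.mpr ⟨hadj.symm, fun hh => htxx hh.2,
              fun hh => hne hh.1.symm⟩)
            omega
          · rw [hc'o w hwy] at hcw
            exact ⟨delE_adj'.mpr ⟨hadj, fun hh => hty hh.1, fun hh => htxx hh.1⟩, hcw⟩

end FiveP
section TwoBetween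
variable {V : Type*} [Fintype V] {G : SimpleGraph V} {v x y : V} {c : V → ℕ}

/-- If `v` is a 2-vertex with neighbors `x ≠ y`, then in any coloring of `G - v`,
for each color `i` one of `x`, `y` is `i`-colored and `i`-saturated. -/
lemma delV2_ext (hnc : ¬ Colorable34 G) {i : ℕ} (hi : i = 3 ∨ i = 4)
    (hv2 : degN G v = 2) (hvx : G.Adj v x) (hvy : G.Adj v y) (hxyne : x ≠ y)
    (hc : IsColoring34 (deleteVert G v) c) :
    (c x = i ∧ {w | (deleteVert G v).Adj x w ∧ c w = i}.ncard = i) ∨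
    (c y = i ∧ {w | (deleteVert G v).Adj y w ∧ c w = i}.ncard = i) := by
  classical
  obtain ⟨hc3, hcnt⟩ := hc
  have hnbv : ∀ w, G.Adj v w → w = x ∨ w = y := two_nbrs hv2 hvx hvy hxyne
  have hvnex : v ≠ x := G.ne_of_adj hvx
  have hvney : v ≠ y := G.ne_of_adj hvy
  by_contra hcon
  push_neg at hcon
  obtain ⟨hbx, hby⟩ := hcon
  apply hnc
  set c' : V → ℕ := fun w => if w = v then i else c w with hc'
  have hc'v : c' v = i := by simp [hc']
  have hc'o : ∀ w, w ≠ v → c' w = c w := by intro w hw; simp [hc', hw]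
  have hc'3 : ∀ w, c' w = 3 ∨ c' w = 4 := by
    intro w
    by_cases hw : w = v
    · subst hw; rw [hc'v]; exact hi
    · rw [hc'o w hw]; exact hc3 w
  refine ⟨c', hc'3, fun t => ?_⟩
  by_cases htv : t = v
  · subst htv
    exact bound_by_deg3 hc'3 t (by omega)
  -- uniform handling for x and y
  have key : ∀ z : V, z ≠ v → (c z = i → {w | (deleteVert G v).Adj z w ∧ c w = i}.ncard ≠ i) →
      G.Adj v z →
      {w | G.Adj z w ∧ c' w = c' z}.ncard ≤ c' z := by
    intro z hzv hbz hvz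
    rw [hc'o z hzv]
    by_cases hcz : c z = i
    · have hlt : {w | (deleteVert G v).Adj z w ∧ c w = i}.ncard + 1 ≤ i := by
        have h1 := hcnt z
        rw [hcz] at h1
        have := hbz hcz
        omega
      refine le_trans (le_of_subset'
        (T := insert v {w | (deleteVert G v).Adj z w ∧ c w = i}) ?_
        (Set.ncard_insert_le _ _)) (by omega)
      rintro w ⟨hadj, hcw⟩
      by_cases hwv : w = v
      · exact Or.inl hwv
      · rw [hc'o w hwv] at hcw
        rw [hcz] at hcw
        exact Or.inr ⟨⟨hadj, hzv, hwv⟩, hcw⟩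
    · refine le_of_subset' ?_ (hcnt z)
      rintro w ⟨hadj, hcw⟩
      have hwv : w ≠ v := by
        intro hw; subst hw
        rw [hc'v] at hcw
        exact hcz (hcw ▸ rfl)
      rw [hc'o w hwv] at hcw
      exact ⟨⟨hadj, hzv, hwv⟩, hcw⟩
  by_cases htx : t = x
  · subst htx; exact key t htv hbx hvx
  by_cases hty : t = y
  · subst hty; exact key t htv hby hvy
  · rw [hc'o t htv]
    refine le_of_subset' ?_ (hcnt t)
    rintro w ⟨hadj, hcw⟩
    have hwv : w ≠ v := by
      intro hw; subst hw
      rcases hnbv t hadj.symm with h | h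
      · exact htx h
      · exact hty h
    rw [hc'o w hwv] at hcw
    exact ⟨⟨hadj, htv, hwv⟩, hcw⟩

/-- Inner flip for Lemma D. -/
lemma flip_deg5_nbr (hnc : ¬ Colorable34 G)
    (hv2 : degN G v = 2) (hvx : G.Adj v x) (hvy : G.Adj v y) (hxyne : x ≠ y)
    (hnadj : ¬ G.Adj x y) (hdy : degN G y = 5)
    (hc : IsColoring34 (deleteVert G v) c)
    (hcx3 : c x = 3) (hcy4 : c y = 4)
    (hsy : {w | (deleteVert G v).Adj y w ∧ c w = 4}.ncard = 4) : False := by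
  classical
  obtain ⟨hc3, hcnt⟩ := hc
  have hnbv : ∀ w, G.Adj v w → w = x ∨ w = y := two_nbrs hv2 hvx hvy hxyne
  have hvnex : v ≠ x := G.ne_of_adj hvx
  have hvney : v ≠ y := G.ne_of_adj hvy
  have hall : ∀ w, (deleteVert G v).Adj y w → c w = 4 := by
    apply all_nbrs
    rw [hsy, deg_delV hvy.symm, hdy]
  set c' : V → ℕ := fun w => if w = v then 4 else if w = y then 3 else c w with hc'
  have hc'v : c' v = 4 := by simp [hc']
  have hc'y : c' y = 3 := by simp [hc', hvney.symm]
  have hc'o : ∀ w, w ≠ v → w ≠ y → c' w = c w := by intro w hw hw'; simp [hc', hw, hw']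
  have hc'3 : ∀ w, c' w = 3 ∨ c' w = 4 := by
    intro w
    by_cases hw : w = v
    · subst hw; rw [hc'v]; omega
    by_cases hw' : w = y
    · subst hw'; rw [hc'y]; omega
    · rw [hc'o w hw hw']; exact hc3 w
  apply hnc
  refine ⟨c', hc'3, fun t => ?_⟩
  by_cases htv : t = v
  · subst htv
    exact bound_by_deg3 hc'3 t (by omega)
  by_cases hty : t = y
  · subst hty
    rw [hc'y]
    refine le_of_subset' (T := (∅ : Set V)) ?_ (by simp)
    rintro w ⟨hadj, hcw⟩
    exfalso
    by_cases hwv : w = v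
    · subst hwv; rw [hc'v] at hcw; omega
    · have hwt : w ≠ t := (G.ne_of_adj hadj).symm
      rw [hc'o w hwv hwt] at hcw
      have := hall w ⟨hadj, htv, hwv⟩
      omega
  by_cases htx : t = x
  · subst htx
    rw [hc'o t htv hty]
    refine le_of_subset' ?_ (hcnt t)
    rintro w ⟨hadj, hcw⟩
    have hwy : w ≠ y := by
      intro hw; subst hw; exact hnadj hadj
    have hwv : w ≠ v := by
      intro hw; subst hw
      rw [hc'v] at hcw
      rw [hcx3] at hcw
      omega
    rw [hc'o w hwv hwy] at hcw
    exact ⟨⟨hadj, htv, hwv⟩, hcw⟩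
  · rw [hc'o t htv hty]
    refine le_of_subset' ?_ (hcnt t)
    rintro w ⟨hadj, hcw⟩
    have hwv : w ≠ v := by
      intro hw; subst hw
      rcases hnbv t hadj.symm with h | h
      · exact htx h
      · exact hty h
    by_cases hwy : w = y
    · exfalso
      subst hwy
      rw [hc'y] at hcw
      have h4t := hall t ⟨hadj.symm, hvney.symm, htv⟩
      omega
    · rw [hc'o w hwv hwy] at hcw
      exact ⟨⟨hadj, htv, hwv⟩, hcw⟩

/-- Lemma D: no 2-vertex has both neighbors of degree 5. -/
lemma no_2_between_deg5 (hG : MinNonColorable34 G) (hgirth : GirthAtLeast5 G)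
    (hv2 : degN G v = 2) (hvx : G.Adj v x) (hvy : G.Adj v y) (hxyne : x ≠ y)
    (hdx : degN G x = 5) (hdy : degN G y = 5) : False := by
  have hnadjyx : ¬ G.Adj y x := hgirth.1 x v y hvx.symm hvy
  have hnadjxy : ¬ G.Adj x y := fun h => hnadjyx h.symm
  obtain ⟨c, hc⟩ := hG.2.1 v
  have h3 := delV2_ext hG.1 (Or.inl rfl) hv2 hvx hvy hxyne hc
  have h4 := delV2_ext hG.1 (Or.inr rfl) hv2 hvx hvy hxyne hc
  rcases h3 with ⟨hx3, _⟩ | ⟨hy3, _⟩ <;> rcases h4 with ⟨hx4, hsx4⟩ | ⟨hy4, hsy4⟩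
  · rw [hx3] at hx4; omega
  · exact flip_deg5_nbr hG.1 hv2 hvx hvy hxyne hnadjxy hdy hc hx3 hy4 hsy4
  · exact flip_deg5_nbr hG.1 hv2 hvy hvx hxyne.symm hnadjyx hdx hc hy3 hx4 hsx4
  · rw [hy3] at hy4; omega

end TwoBetween
section BigF
variable {V : Type*} [Fintype V] {G : SimpleGraph V}

/-- Lemma F: there is no 7-cycle of the form
5s, 2, 6p, 2, 5p, 2, 6p in a minimal graph of girth ≥ 5. -/
lemma no_F7_5p (hG : MinNonColorable34 G) (hgirth : GirthAtLeast5 G)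
    (v1 v2 v3 v4 v5 v6 v7 : V)
    (hnd : ([v1, v2, v3, v4, v5, v6, v7] : List V).Nodup)
    (a12 : G.Adj v1 v2) (a23 : G.Adj v2 v3) (a34 : G.Adj v3 v4)
    (a45 : G.Adj v4 v5) (a56 : G.Adj v5 v6) (a67 : G.Adj v6 v7)
    (a71 : G.Adj v7 v1)
    (h1 : Is5s G v1) (h2 : degN G v2 = 2) (h3 : Is6p G v3)
    (h4 : degN G v4 = 2) (h5 : Is5p G v5) (h6 : degN G v6 = 2)
    (h7 : Is6p G v7) : False := by
  classical
  simp only [List.nodup_cons, List.mem_cons, List.not_mem_nil, or_false, not_or,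
    List.nodup_nil, and_true, List.mem_singleton] at hnd
  obtain ⟨⟨h12, h13, h14, h15, h16, h17⟩, ⟨h23, h24, h25, h26, h27⟩,
    ⟨h34, h35, h36, h37⟩, ⟨h45, h46, h47⟩, ⟨h56, h57⟩, h67, -⟩ := hnd
  obtain ⟨hd1, ht1⟩ := h1
  obtain ⟨hd3, ht3⟩ := h3
  obtain ⟨hd5, ht5⟩ := h5
  obtain ⟨hd7, ht7⟩ := h7
  -- neighborhoods of the 2-vertices
  have hnb2 : ∀ w, G.Adj v2 w → w = v1 ∨ w = v3 := two_nbrs h2 a12.symm a23 h13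
  have hnb4 : ∀ w, G.Adj v4 w → w = v3 ∨ w = v5 := two_nbrs h4 a34.symm a45 h35
  have hnb6 : ∀ w, G.Adj v6 w → w = v5 ∨ w = v7 := two_nbrs h6 a56.symm a67 h57
  -- unique 3⁺ neighbors
  obtain ⟨z3, hz3adj, hz3deg, hz3nb⟩ := tpn_one ht3
  obtain ⟨z5, hz5adj, hz5deg, hz5nb⟩ := tpn_one ht5
  have hnb7 : ∀ w, G.Adj v7 w → w = v1 ∨ degN G w ≤ 2 :=
    tpn_one' ht7 a71 (by omega)
  obtain ⟨z1, hz1ne7, hz1adj, hz1deg, hnb1⟩ := tpn_two ht1 a71.symm (by omega)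
  -- non-adjacencies from girth
  have n31 : ¬ G.Adj v3 v1 := hgirth.1 v1 v2 v3 a12 a23
  have n53 : ¬ G.Adj v5 v3 := hgirth.1 v3 v4 v5 a34 a45
  have n35 : ¬ G.Adj v3 v5 := fun h => n53 h.symm
  have n75 : ¬ G.Adj v7 v5 := hgirth.1 v5 v6 v7 a56 a67
  have n57 : ¬ G.Adj v5 v7 := fun h => n75 h.symm
  have n41 : ¬ G.Adj v4 v1 := hgirth.2 v1 v2 v3 v4 h13 h24 a12 a23 a34
  have n14 : ¬ G.Adj v1 v4 := fun h => n41 h.symm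
  have n37 : ¬ G.Adj v3 v7 := hgirth.2 v7 v1 v2 v3 (Ne.symm h27) h13 a71 a12 a23
  have n73 : ¬ G.Adj v7 v3 := fun h => n37 h.symm
  have n15 : ¬ G.Adj v1 v5 := hgirth.2 v5 v6 v7 v1 h57 (Ne.symm h16) a56 a67 a71
  have n51 : ¬ G.Adj v5 v1 := fun h => n15 h.symm
  have n61 : ¬ G.Adj v6 v1 := hgirth.1 v1 v7 v6 a71.symm a67.symm
  have n16 : ¬ G.Adj v1 v6 := fun h => n61 h.symm
  -- basic distinctness of the z's
  have hz3n4 : z3 ≠ v4 := by intro h; rw [h] at hz3deg; omega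
  have hz3n2 : z3 ≠ v2 := by intro h; rw [h] at hz3deg; omega
  have hz3n5 : z3 ≠ v5 := fun h => n35 (h ▸ hz3adj)
  have hz3n3 : z3 ≠ v3 := fun h => G.irrefl (h ▸ hz3adj)
  have hz3n1 : z3 ≠ v1 := fun h => n31 (h ▸ hz3adj)
  have hz5n4 : z5 ≠ v4 := by intro h; rw [h] at hz5deg; omega
  have hz5n6 : z5 ≠ v6 := by intro h; rw [h] at hz5deg; omega
  have hz5n3 : z5 ≠ v3 := fun h => n53 (h ▸ hz5adj)
  have hz5n5 : z5 ≠ v5 := fun h => G.irrefl (h ▸ hz5adj)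
  have hz5n7 : z5 ≠ v7 := fun h => n57 (h ▸ hz5adj)
  have hz5n1 : z5 ≠ v1 := fun h => n51 (h ▸ hz5adj)
  have hz1n4 : z1 ≠ v4 := by intro h; rw [h] at hz1deg; omega
  have hz1n2 : z1 ≠ v2 := by intro h; rw [h] at hz1deg; omega
  have hz1n6 : z1 ≠ v6 := by intro h; rw [h] at hz1deg; omega
  have hz1n1 : z1 ≠ v1 := fun h => G.irrefl (h ▸ hz1adj)
  have hz1n3 : z1 ≠ v3 := by
    intro h; rw [h] at hz1adj; exact n31 hz1adj.symm
  have hz1n5 : z1 ≠ v5 := by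
    intro h; rw [h] at hz1adj; exact n15 hz1adj
  -- the coloring of G - v4
  obtain ⟨c, hc3, hcnt⟩ := hG.2.1 v4
  set H := deleteVert G v4 with hH
  have hHadj : ∀ {a b : V}, G.Adj a b → a ≠ v4 → b ≠ v4 → H.Adj a b :=
    fun h ha hb => ⟨h, ha, hb⟩
  have hHG : ∀ {a b : V}, H.Adj a b → G.Adj a b := fun h => h.1
  have hdH3 : degN H v3 = 5 := by rw [hH, deg_delV a34, hd3]
  have hdH5 : degN H v5 = 4 := by rw [hH, deg_delV a45.symm, hd5]
  have hdH1 : degN H v1 = 5 := by rw [hH, deg_delV_nonadj h14 n14, hd1]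
  have n74 : ¬ G.Adj v7 v4 := by
    intro h
    rcases hnb4 v7 h.symm with h' | h'
    · exact h37 h'.symm
    · exact h57 h'.symm
  have hdH7 : degN H v7 = 6 := by
    rw [hH, deg_delV_nonadj (Ne.symm h47) n74, hd7]
  -- saturation dichotomy at v4
  have h3e := delV2_ext (v := v4) hG.1 (Or.inl rfl) h4 a34.symm a45 h35 ⟨hc3, hcnt⟩
  have h4e := delV2_ext (v := v4) hG.1 (Or.inr rfl) h4 a34.symm a45 h35 ⟨hc3, hcnt⟩
  rw [← hH] at h3e h4e
  rcases h3e with ⟨hc33, hs33⟩ | ⟨hc53, hs53⟩ <;>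
    rcases h4e with ⟨hc34, hs34⟩ | ⟨hc54, hs54⟩
  · rw [hc33] at hc34; omega
  · -- Case I : v3 3-saturated, v5 4-saturated
    have hall5 : ∀ w, H.Adj v5 w → c w = 4 :=
      all_nbrs (le_of_eq (hdH5.trans hs54.symm))
    set c' : V → ℕ := fun w => if w = v4 then 4 else if w = v5 then 3 else c w with hc'
    have e4 : c' v4 = 4 := by simp [hc']
    have e5 : c' v5 = 3 := by simp [hc', Ne.symm h45]
    have eo : ∀ w, w ≠ v4 → w ≠ v5 → c' w = c w := by
      intro w hw hw'; simp [hc', hw, hw']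
    have hc'3 : ∀ w, c' w = 3 ∨ c' w = 4 := by
      intro w
      by_cases hw : w = v4
      · rw [hw, e4]; omega
      by_cases hw' : w = v5
      · rw [hw', e5]; omega
      · rw [eo w hw hw']; exact hc3 w
    apply hG.1
    refine ⟨c', hc'3, fun t => ?_⟩
    by_cases htv4 : t = v4
    · rw [htv4]; exact bound_by_deg3 hc'3 v4 (by omega)
    by_cases htv5 : t = v5
    · rw [htv5, e5]
      refine le_of_subset' (T := (∅ : Set V)) ?_ (by simp)
      rintro w ⟨hadj, hcw⟩
      exfalso
      by_cases hwv4 : w = v4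
      · rw [hwv4, e4] at hcw; omega
      · have hwv5 : w ≠ v5 := (G.ne_of_adj hadj).symm
        rw [eo w hwv4 hwv5] at hcw
        have := hall5 w ⟨hadj, Ne.symm h45, hwv4⟩
        omega
    by_cases htv3 : t = v3
    · rw [htv3, eo v3 h34 h35]
      refine le_of_subset' ?_ (hcnt v3)
      rintro w ⟨hadj, hcw⟩
      have hwv5 : w ≠ v5 := fun h => n35 (h ▸ hadj)
      have hwv4 : w ≠ v4 := by
        intro h
        rw [h, e4, hc33] at hcw
        omega
      rw [eo w hwv4 hwv5] at hcw
      exact ⟨⟨hadj, h34, hwv4⟩, hcw⟩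
    · by_cases hdt : degN G t ≤ 3
      · exact bound_by_deg3 hc'3 t hdt
      · rw [eo t htv4 htv5]
        refine le_of_subset' ?_ (hcnt t)
        rintro w ⟨hadj, hcw⟩
        have hwv4 : w ≠ v4 := by
          intro h
          rcases hnb4 t (h ▸ hadj).symm with h' | h'
          · exact htv3 h'
          · exact htv5 h'
        by_cases hwv5 : w = v5
        · exfalso
          rw [hwv5, e5] at hcw
          have h4t := hall5 t ⟨(hwv5 ▸ hadj).symm, Ne.symm h45, htv4⟩
          omega
        · rw [eo w hwv4 hwv5] at hcw
          exact ⟨⟨hadj, htv4, hwv4⟩, hcw⟩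
  · -- Case II : v3 4-saturated, v5 3-saturated
    have hp3 := cnt_partition hc3 H v3
    rw [hdH3] at hp3
    have hcnt3v3 : {w | H.Adj v3 w ∧ c w = 3}.ncard = 1 := by omega
    have hp5 := cnt_partition hc3 H v5
    rw [hdH5] at hp5
    have hcnt4v5 : {w | H.Adj v5 w ∧ c w = 4}.ncard = 1 := by omega
    -- Candidate C1 : z3 must be 3-colored and 3-saturated
    have hz3b : c z3 = 3 ∧ {w | H.Adj z3 w ∧ c w = 3}.ncard = 3 := by
      by_contra hcon
      have hcon' : c z3 = 3 → {w | H.Adj z3 w ∧ c w = 3}.ncard ≠ 3 := by tauto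
      apply hG.1
      set c' : V → ℕ := fun w => if w = v4 then 4 else if w = v3 then 3 else c w with hc'
      have e4 : c' v4 = 4 := by simp [hc']
      have e3 : c' v3 = 3 := by simp [hc', h34]
      have eo : ∀ w, w ≠ v4 → w ≠ v3 → c' w = c w := by
        intro w hw hw'; simp [hc', hw, hw']
      have hc'3 : ∀ w, c' w = 3 ∨ c' w = 4 := by
        intro w
        by_cases hw : w = v4
        · rw [hw, e4]; omega
        by_cases hw' : w = v3
        · rw [hw', e3]; omega
        · rw [eo w hw hw']; exact hc3 w
      refine ⟨c', hc'3, fun t => ?_⟩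
      by_cases htv4 : t = v4
      · rw [htv4]; exact bound_by_deg3 hc'3 v4 (by omega)
      by_cases htv3 : t = v3
      · rw [htv3, e3]
        refine le_of_subset' (T := {w | H.Adj v3 w ∧ c w = 3}) ?_
          (le_trans (le_of_eq hcnt3v3) (by norm_num : (1:ℕ) ≤ 3))
        rintro w ⟨hadj, hcw⟩
        have hwv4 : w ≠ v4 := by intro h; rw [h, e4] at hcw; omega
        have hwv3 : w ≠ v3 := (G.ne_of_adj hadj).symm
        rw [eo w hwv4 hwv3] at hcw
        exact ⟨⟨hadj, h34, hwv4⟩, hcw⟩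
      by_cases htv5 : t = v5
      · rw [htv5, eo v5 (Ne.symm h45) (Ne.symm h35)]
        refine le_of_subset' ?_ (hcnt v5)
        rintro w ⟨hadj, hcw⟩
        have hwv4 : w ≠ v4 := by
          intro h; rw [h, e4, hc53] at hcw; omega
        have hwv3 : w ≠ v3 := fun h => n53 (h ▸ hadj)
        rw [eo w hwv4 hwv3] at hcw
        exact ⟨⟨hadj, Ne.symm h45, hwv4⟩, hcw⟩
      by_cases htz3 : t = z3
      · rw [htz3, eo z3 hz3n4 hz3n3]
        rcases hc3 z3 with hz33 | hz34
        · have hle : {w | H.Adj z3 w ∧ c w = 3}.ncard ≤ 2 := by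
            have hle1 := hcnt z3
            rw [hz33] at hle1
            have hle2 := hcon' hz33
            omega
          rw [hz33]
          refine le_trans (le_of_subset'
            (T := insert v3 {w | H.Adj z3 w ∧ c w = 3}) ?_
            (Set.ncard_insert_le _ _)) (by omega)
          rintro w ⟨hadj, hcw⟩
          by_cases hwv3 : w = v3
          · exact Or.inl hwv3
          · have hwv4 : w ≠ v4 := by intro h; rw [h, e4] at hcw; omega
            rw [eo w hwv4 hwv3] at hcw
            exact Or.inr ⟨⟨hadj, hz3n4, hwv4⟩, hcw⟩
        · rw [hz34]
          have hle1 := hcnt z3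
          rw [hz34] at hle1
          refine le_of_subset' ?_ hle1
          rintro w ⟨hadj, hcw⟩
          have hwv3 : w ≠ v3 := by intro h; rw [h, e3] at hcw; omega
          have hwv4 : w ≠ v4 := by
            intro h
            rcases hnb4 z3 (h ▸ hadj).symm with h' | h'
            · exact hz3n3 h'
            · exact hz3n5 h'
          rw [eo w hwv4 hwv3] at hcw
          exact ⟨⟨hadj, hz3n4, hwv4⟩, hcw⟩
      · by_cases hdt : degN G t ≤ 3
        · exact bound_by_deg3 hc'3 t hdt
        · rw [eo t htv4 htv3]
          refine le_of_subset' ?_ (hcnt t)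
          rintro w ⟨hadj, hcw⟩
          have hwv4 : w ≠ v4 := by
            intro h
            rcases hnb4 t (h ▸ hadj).symm with h' | h'
            · exact htv3 h'
            · exact htv5 h'
          by_cases hwv3 : w = v3
          · exfalso
            rcases hz3nb t ((hwv3 ▸ hadj).symm) with h' | h'
            · exact htz3 h'
            · omega
          · rw [eo w hwv4 hwv3] at hcw
            exact ⟨⟨hadj, htv4, hwv4⟩, hcw⟩
    obtain ⟨hcz3, hsz3⟩ := hz3b
    have h3set3 : {w | H.Adj v3 w ∧ c w = 3} = {z3} :=
      set_eq_single ⟨⟨hz3adj, h34, hz3n4⟩, hcz3⟩ (le_of_eq hcnt3v3)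
    have hcv2 : c v2 = 4 := by
      rcases hc3 v2 with h' | h'
      · exfalso
        have hmem : v2 ∈ {w | H.Adj v3 w ∧ c w = 3} := ⟨⟨a23.symm, h34, h24⟩, h'⟩
        rw [h3set3] at hmem
        have h23z : v2 = z3 := by simpa using hmem
        exact hz3n2 h23z.symm
      · exact h'
    -- Candidate C2 : z5 must be 4-colored and 4-saturated
    have hz5b : c z5 = 4 ∧ {w | H.Adj z5 w ∧ c w = 4}.ncard = 4 := by
      by_contra hcon
      have hcon' : c z5 = 4 → {w | H.Adj z5 w ∧ c w = 4}.ncard ≠ 4 := by tauto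
      apply hG.1
      set c' : V → ℕ := fun w => if w = v4 then 3 else if w = v5 then 4 else c w with hc'
      have e4 : c' v4 = 3 := by simp [hc']
      have e5 : c' v5 = 4 := by simp [hc', Ne.symm h45]
      have eo : ∀ w, w ≠ v4 → w ≠ v5 → c' w = c w := by
        intro w hw hw'; simp [hc', hw, hw']
      have hc'3 : ∀ w, c' w = 3 ∨ c' w = 4 := by
        intro w
        by_cases hw : w = v4
        · rw [hw, e4]; omega
        by_cases hw' : w = v5
        · rw [hw', e5]; omega
        · rw [eo w hw hw']; exact hc3 w
      refine ⟨c', hc'3, fun t => ?_⟩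
      by_cases htv4 : t = v4
      · rw [htv4]; exact bound_by_deg3 hc'3 v4 (by omega)
      by_cases htv5 : t = v5
      · rw [htv5, e5]
        refine le_of_subset' (T := {w | H.Adj v5 w ∧ c w = 4}) ?_
          (le_trans (le_of_eq hcnt4v5) (by norm_num : (1:ℕ) ≤ 4))
        rintro w ⟨hadj, hcw⟩
        have hwv4 : w ≠ v4 := by intro h; rw [h, e4] at hcw; omega
        have hwv5 : w ≠ v5 := (G.ne_of_adj hadj).symm
        rw [eo w hwv4 hwv5] at hcw
        exact ⟨⟨hadj, Ne.symm h45, hwv4⟩, hcw⟩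
      by_cases htv3 : t = v3
      · rw [htv3, eo v3 h34 h35]
        refine le_of_subset' ?_ (hcnt v3)
        rintro w ⟨hadj, hcw⟩
        have hwv4 : w ≠ v4 := by
          intro h; rw [h, e4, hc34] at hcw; omega
        have hwv5 : w ≠ v5 := fun h => n35 (h ▸ hadj)
        rw [eo w hwv4 hwv5] at hcw
        exact ⟨⟨hadj, h34, hwv4⟩, hcw⟩
      by_cases htz5 : t = z5
      · rw [htz5, eo z5 hz5n4 hz5n5]
        rcases hc3 z5 with hz53 | hz54
        · rw [hz53]
          have hle1 := hcnt z5
          rw [hz53] at hle1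
          refine le_of_subset' ?_ hle1
          rintro w ⟨hadj, hcw⟩
          have hwv5 : w ≠ v5 := by intro h; rw [h, e5] at hcw; omega
          have hwv4 : w ≠ v4 := by
            intro h
            rcases hnb4 z5 (h ▸ hadj).symm with h' | h'
            · exact hz5n3 h'
            · exact hz5n5 h'
          rw [eo w hwv4 hwv5] at hcw
          exact ⟨⟨hadj, hz5n4, hwv4⟩, hcw⟩
        · have hle : {w | H.Adj z5 w ∧ c w = 4}.ncard ≤ 3 := by
            have hle1 := hcnt z5
            rw [hz54] at hle1
            have hle2 := hcon' hz54
            omega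
          rw [hz54]
          refine le_trans (le_of_subset'
            (T := insert v5 {w | H.Adj z5 w ∧ c w = 4}) ?_
            (Set.ncard_insert_le _ _)) (by omega)
          rintro w ⟨hadj, hcw⟩
          by_cases hwv5 : w = v5
          · exact Or.inl hwv5
          · have hwv4 : w ≠ v4 := by intro h; rw [h, e4] at hcw; omega
            rw [eo w hwv4 hwv5] at hcw
            exact Or.inr ⟨⟨hadj, hz5n4, hwv4⟩, hcw⟩
      · by_cases hdt : degN G t ≤ 3
        · exact bound_by_deg3 hc'3 t hdt
        · rw [eo t htv4 htv5]
          refine le_of_subset' ?_ (hcnt t)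
          rintro w ⟨hadj, hcw⟩
          have hwv4 : w ≠ v4 := by
            intro h
            rcases hnb4 t (h ▸ hadj).symm with h' | h'
            · exact htv3 h'
            · exact htv5 h'
          by_cases hwv5 : w = v5
          · exfalso
            rcases hz5nb t ((hwv5 ▸ hadj).symm) with h' | h'
            · exact htz5 h'
            · omega
          · rw [eo w hwv4 hwv5] at hcw
            exact ⟨⟨hadj, htv4, hwv4⟩, hcw⟩
    obtain ⟨hcz5, hsz5⟩ := hz5b
    have h4set5 : {w | H.Adj v5 w ∧ c w = 4} = {z5} :=
      set_eq_single ⟨⟨hz5adj, Ne.symm h45, hz5n4⟩, hcz5⟩ (le_of_eq hcnt4v5)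
    have hcv6 : c v6 = 3 := by
      rcases hc3 v6 with h' | h'
      · exact h'
      · exfalso
        have hmem : v6 ∈ {w | H.Adj v5 w ∧ c w = 4} := ⟨⟨a56, Ne.symm h45, Ne.symm h46⟩, h'⟩
        rw [h4set5] at hmem
        have h65z : v6 = z5 := by simpa using hmem
        exact hz5n6 h65z.symm
    -- Candidate C3 : v7 must be 4-colored and 4-saturated
    have hv7b : c v7 = 4 ∧ {w | H.Adj v7 w ∧ c w = 4}.ncard = 4 := by
      by_contra hcon
      have hcon' : c v7 = 4 → {w | H.Adj v7 w ∧ c w = 4}.ncard ≠ 4 := by tauto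
      apply hG.1
      set c' : V → ℕ := fun w => if w = v4 then 3 else if w = v6 then 4 else c w with hc'
      have e4 : c' v4 = 3 := by simp [hc']
      have e6 : c' v6 = 4 := by simp [hc', Ne.symm h46]
      have eo : ∀ w, w ≠ v4 → w ≠ v6 → c' w = c w := by
        intro w hw hw'; simp [hc', hw, hw']
      have hc'3 : ∀ w, c' w = 3 ∨ c' w = 4 := by
        intro w
        by_cases hw : w = v4
        · rw [hw, e4]; omega
        by_cases hw' : w = v6
        · rw [hw', e6]; omega
        · rw [eo w hw hw']; exact hc3 w
      refine ⟨c', hc'3, fun t => ?_⟩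
      by_cases htv4 : t = v4
      · rw [htv4]; exact bound_by_deg3 hc'3 v4 (by omega)
      by_cases htv6 : t = v6
      · rw [htv6]; exact bound_by_deg3 hc'3 v6 (by omega)
      by_cases htv5 : t = v5
      · rw [htv5, eo v5 (Ne.symm h45) h56, hc53]
        have hv6mem : v6 ∈ {w | H.Adj v5 w ∧ c w = 3} :=
          ⟨⟨a56, Ne.symm h45, Ne.symm h46⟩, hcv6⟩
        refine le_of_subset'
          (T := insert v4 ({w | H.Adj v5 w ∧ c w = 3} \ {v6})) ?_
          (le_trans (ncard_insert_diff_le hv6mem v4) (le_of_eq hs53))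
        rintro w ⟨hadj, hcw⟩
        by_cases hwv4 : w = v4
        · rw [hwv4]; exact Set.mem_insert _ _
        · have hwv6 : w ≠ v6 := by intro h; rw [h, e6] at hcw; omega
          rw [eo w hwv4 hwv6] at hcw
          refine Set.mem_insert_of_mem _ ⟨⟨⟨hadj, Ne.symm h45, hwv4⟩, hcw⟩, ?_⟩
          simp [hwv6]
      by_cases htv3 : t = v3
      · rw [htv3, eo v3 h34 h36]
        refine le_of_subset' ?_ (hcnt v3)
        rintro w ⟨hadj, hcw⟩
        have hwv4 : w ≠ v4 := by
          intro h; rw [h, e4, hc34] at hcw; omega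
        have hwv6 : w ≠ v6 := by
          intro h
          rcases hnb6 v3 ((h ▸ hadj).symm) with h' | h'
          · exact h35 h'
          · exact h37 h'
        rw [eo w hwv4 hwv6] at hcw
        exact ⟨⟨hadj, h34, hwv4⟩, hcw⟩
      by_cases htv7 : t = v7
      · rw [htv7, eo v7 (Ne.symm h47) (Ne.symm h67)]
        rcases hc3 v7 with hv73 | hv74
        · rw [hv73]
          have hle1 := hcnt v7
          rw [hv73] at hle1
          refine le_of_subset' ?_ hle1
          rintro w ⟨hadj, hcw⟩
          have hwv6 : w ≠ v6 := by intro h; rw [h, e6] at hcw; omega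
          have hwv4 : w ≠ v4 := fun h => n74 (h ▸ hadj)
          rw [eo w hwv4 hwv6] at hcw
          exact ⟨⟨hadj, Ne.symm h47, hwv4⟩, hcw⟩
        · have hle : {w | H.Adj v7 w ∧ c w = 4}.ncard ≤ 3 := by
            have hle1 := hcnt v7
            rw [hv74] at hle1
            have hle2 := hcon' hv74
            omega
          rw [hv74]
          refine le_trans (le_of_subset'
            (T := insert v6 {w | H.Adj v7 w ∧ c w = 4}) ?_
            (Set.ncard_insert_le _ _)) (by omega)
          rintro w ⟨hadj, hcw⟩
          by_cases hwv6 : w = v6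
          · exact Or.inl hwv6
          · have hwv4 : w ≠ v4 := by intro h; rw [h, e4] at hcw; omega
            rw [eo w hwv4 hwv6] at hcw
            exact Or.inr ⟨⟨hadj, Ne.symm h47, hwv4⟩, hcw⟩
      · by_cases hdt : degN G t ≤ 3
        · exact bound_by_deg3 hc'3 t hdt
        · rw [eo t htv4 htv6]
          refine le_of_subset' ?_ (hcnt t)
          rintro w ⟨hadj, hcw⟩
          have hwv4 : w ≠ v4 := by
            intro h
            rcases hnb4 t (h ▸ hadj).symm with h' | h'
            · exact htv3 h'
            · exact htv5 h'
          have hwv6 : w ≠ v6 := by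
            intro h
            rcases hnb6 t ((h ▸ hadj).symm) with h' | h'
            · exact htv5 h'
            · exact htv7 h'
          rw [eo w hwv4 hwv6] at hcw
          exact ⟨⟨hadj, htv4, hwv4⟩, hcw⟩
    -- Candidate C4 : v1 must be 3-colored and 3-saturated
    have hv1b : c v1 = 3 ∧ {w | H.Adj v1 w ∧ c w = 3}.ncard = 3 := by
      by_contra hcon
      have hcon' : c v1 = 3 → {w | H.Adj v1 w ∧ c w = 3}.ncard ≠ 3 := by tauto
      apply hG.1
      set c' : V → ℕ := fun w => if w = v4 then 4 else if w = v2 then 3 else c w with hc'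
      have e4 : c' v4 = 4 := by simp [hc']
      have e2 : c' v2 = 3 := by simp [hc', h24]
      have eo : ∀ w, w ≠ v4 → w ≠ v2 → c' w = c w := by
        intro w hw hw'; simp [hc', hw, hw']
      have hc'3 : ∀ w, c' w = 3 ∨ c' w = 4 := by
        intro w
        by_cases hw : w = v4
        · rw [hw, e4]; omega
        by_cases hw' : w = v2
        · rw [hw', e2]; omega
        · rw [eo w hw hw']; exact hc3 w
      refine ⟨c', hc'3, fun t => ?_⟩
      by_cases htv4 : t = v4
      · rw [htv4]; exact bound_by_deg3 hc'3 v4 (by omega)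
      by_cases htv2 : t = v2
      · rw [htv2]; exact bound_by_deg3 hc'3 v2 (by omega)
      by_cases htv3 : t = v3
      · rw [htv3, eo v3 h34 (Ne.symm h23), hc34]
        have hv2mem : v2 ∈ {w | H.Adj v3 w ∧ c w = 4} :=
          ⟨⟨a23.symm, h34, h24⟩, hcv2⟩
        refine le_of_subset'
          (T := insert v4 ({w | H.Adj v3 w ∧ c w = 4} \ {v2})) ?_
          (le_trans (ncard_insert_diff_le hv2mem v4) (le_of_eq hs34))
        rintro w ⟨hadj, hcw⟩
        by_cases hwv4 : w = v4
        · rw [hwv4]; exact Set.mem_insert _ _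
        · have hwv2 : w ≠ v2 := by intro h; rw [h, e2] at hcw; omega
          rw [eo w hwv4 hwv2] at hcw
          refine Set.mem_insert_of_mem _ ⟨⟨⟨hadj, h34, hwv4⟩, hcw⟩, ?_⟩
          simp [hwv2]
      by_cases htv5 : t = v5
      · rw [htv5, eo v5 (Ne.symm h45) (Ne.symm h25)]
        refine le_of_subset' ?_ (hcnt v5)
        rintro w ⟨hadj, hcw⟩
        have hwv4 : w ≠ v4 := by
          intro h; rw [h, e4, hc53] at hcw; omega
        have hwv2 : w ≠ v2 := by
          intro h
          rcases hnb2 v5 ((h ▸ hadj).symm) with h' | h'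
          · exact h15 h'.symm
          · exact h35 h'.symm
        rw [eo w hwv4 hwv2] at hcw
        exact ⟨⟨hadj, Ne.symm h45, hwv4⟩, hcw⟩
      by_cases htv1 : t = v1
      · rw [htv1, eo v1 h14 h12]
        rcases hc3 v1 with hv13 | hv14
        · have hle : {w | H.Adj v1 w ∧ c w = 3}.ncard ≤ 2 := by
            have hle1 := hcnt v1
            rw [hv13] at hle1
            have hle2 := hcon' hv13
            omega
          rw [hv13]
          refine le_trans (le_of_subset'
            (T := insert v2 {w | H.Adj v1 w ∧ c w = 3}) ?_
            (Set.ncard_insert_le _ _)) (by omega)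
          rintro w ⟨hadj, hcw⟩
          by_cases hwv2 : w = v2
          · exact Or.inl hwv2
          · have hwv4 : w ≠ v4 := by intro h; rw [h, e4] at hcw; omega
            rw [eo w hwv4 hwv2] at hcw
            exact Or.inr ⟨⟨hadj, h14, hwv4⟩, hcw⟩
        · rw [hv14]
          have hle1 := hcnt v1
          rw [hv14] at hle1
          refine le_of_subset' ?_ hle1
          rintro w ⟨hadj, hcw⟩
          have hwv2 : w ≠ v2 := by intro h; rw [h, e2] at hcw; omega
          have hwv4 : w ≠ v4 := fun h => n14 (h ▸ hadj)
          rw [eo w hwv4 hwv2] at hcw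
          exact ⟨⟨hadj, h14, hwv4⟩, hcw⟩
      · by_cases hdt : degN G t ≤ 3
        · exact bound_by_deg3 hc'3 t hdt
        · rw [eo t htv4 htv2]
          refine le_of_subset' ?_ (hcnt t)
          rintro w ⟨hadj, hcw⟩
          have hwv4 : w ≠ v4 := by
            intro h
            rcases hnb4 t (h ▸ hadj).symm with h' | h'
            · exact htv3 h'
            · exact htv5 h'
          have hwv2 : w ≠ v2 := by
            intro h
            rcases hnb2 t ((h ▸ hadj).symm) with h' | h'
            · exact htv1 h'
            · exact htv3 h'
          rw [eo w hwv4 hwv2] at hcw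
          exact ⟨⟨hadj, htv4, hwv4⟩, hcw⟩
    -- consequences
    have hp7 := cnt_partition hc3 H v7
    rw [hdH7] at hp7
    have hcnt3v7 : {w | H.Adj v7 w ∧ c w = 3}.ncard = 2 := by
      have := hv7b.2; omega
    have h3set7 : {w | H.Adj v7 w ∧ c w = 3} = {v1, v6} :=
      set_eq_pair ⟨⟨a71, Ne.symm h47, h14⟩, hv1b.1⟩
        ⟨⟨a67.symm, Ne.symm h47, Ne.symm h46⟩, hcv6⟩ h16 (le_of_eq hcnt3v7)
    have hp1 := cnt_partition hc3 H v1
    rw [hdH1] at hp1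
    have hcnt4v1 : {w | H.Adj v1 w ∧ c w = 4}.ncard = 2 := by
      have := hv1b.2; omega
    have h4set1 : {w | H.Adj v1 w ∧ c w = 4} = {v2, v7} :=
      set_eq_pair ⟨⟨a12, h14, h24⟩, hcv2⟩
        ⟨⟨a71.symm, h14, Ne.symm h47⟩, hv7b.1⟩ h27 (le_of_eq hcnt4v1)
    have hcz1 : c z1 = 3 := by
      rcases hc3 z1 with h' | h'
      · exact h'
      · exfalso
        have hmem : z1 ∈ {w | H.Adj v1 w ∧ c w = 4} := ⟨⟨hz1adj, h14, hz1n4⟩, h'⟩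
        rw [h4set1] at hmem
        rcases (by simpa using hmem : z1 = v2 ∨ z1 = v7) with h'' | h''
        · exact hz1n2 h''
        · exact hz1ne7 h''
    -- Final candidate C5
    apply hG.1
    set c' : V → ℕ := fun w =>
      if w = v4 then 3 else if w = v6 then 4 else
      if w = v7 then 3 else if w = v1 then 4 else c w with hc'
    have e4 : c' v4 = 3 := by simp [hc']
    have e6 : c' v6 = 4 := by simp [hc', Ne.symm h46]
    have e7 : c' v7 = 3 := by simp [hc', Ne.symm h47, Ne.symm h67]
    have e1 : c' v1 = 4 := by simp [hc', h14, h16, h17]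
    have eo : ∀ w, w ≠ v4 → w ≠ v6 → w ≠ v7 → w ≠ v1 → c' w = c w := by
      intro w hw4 hw6 hw7 hw1; simp [hc', hw4, hw6, hw7, hw1]
    have hc'3 : ∀ w, c' w = 3 ∨ c' w = 4 := by
      intro w
      by_cases hw4 : w = v4
      · rw [hw4, e4]; omega
      by_cases hw6 : w = v6
      · rw [hw6, e6]; omega
      by_cases hw7 : w = v7
      · rw [hw7, e7]; omega
      by_cases hw1 : w = v1
      · rw [hw1, e1]; omega
      · rw [eo w hw4 hw6 hw7 hw1]; exact hc3 w
    refine ⟨c', hc'3, fun t => ?_⟩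
    by_cases htv4 : t = v4
    · rw [htv4]; exact bound_by_deg3 hc'3 v4 (by omega)
    by_cases htv6 : t = v6
    · rw [htv6]; exact bound_by_deg3 hc'3 v6 (by omega)
    by_cases htv1 : t = v1
    · rw [htv1, e1]
      refine le_of_subset' (T := {v2}) ?_ (by simp)
      rintro w ⟨hadj, hcw⟩
      have hwv4 : w ≠ v4 := fun h => n14 (h ▸ hadj)
      have hwv6 : w ≠ v6 := fun h => n16 (h ▸ hadj)
      have hwv7 : w ≠ v7 := by intro h; rw [h, e7] at hcw; omega
      have hwv1 : w ≠ v1 := (G.ne_of_adj hadj).symm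
      rw [eo w hwv4 hwv6 hwv7 hwv1] at hcw
      have hmem : w ∈ {w | H.Adj v1 w ∧ c w = 4} := ⟨⟨hadj, h14, hwv4⟩, hcw⟩
      rw [h4set1] at hmem
      rcases (by simpa using hmem : w = v2 ∨ w = v7) with h'' | h''
      · simp [h'']
      · exact absurd h'' hwv7
    by_cases htv7 : t = v7
    · rw [htv7, e7]
      refine le_of_subset' (T := (∅ : Set V)) ?_ (by simp)
      rintro w ⟨hadj, hcw⟩
      exfalso
      have hwv4 : w ≠ v4 := fun h => n74 (h ▸ hadj)
      have hwv7 : w ≠ v7 := (G.ne_of_adj hadj).symm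
      by_cases hwv6 : w = v6
      · rw [hwv6, e6] at hcw; omega
      by_cases hwv1 : w = v1
      · rw [hwv1, e1] at hcw; omega
      · rw [eo w hwv4 hwv6 hwv7 hwv1] at hcw
        have hmem : w ∈ {w | H.Adj v7 w ∧ c w = 3} := ⟨⟨hadj, Ne.symm h47, hwv4⟩, hcw⟩
        rw [h3set7] at hmem
        rcases (by simpa using hmem : w = v1 ∨ w = v6) with h'' | h''
        · exact hwv1 h''
        · exact hwv6 h''
    by_cases htv3 : t = v3
    · rw [htv3, eo v3 h34 h36 h37 (Ne.symm h13), hc34]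
      refine le_of_subset' (T := {w | H.Adj v3 w ∧ c w = 4}) ?_ (le_of_eq hs34)
      rintro w ⟨hadj, hcw⟩
      have hwv4 : w ≠ v4 := by intro h; rw [h, e4] at hcw; omega
      have hwv6 : w ≠ v6 := by
        intro h
        rcases hnb6 v3 ((h ▸ hadj).symm) with h' | h'
        · exact h35 h'
        · exact h37 h'
      have hwv7 : w ≠ v7 := by intro h; rw [h, e7] at hcw; omega
      have hwv1 : w ≠ v1 := fun h => n31 (h ▸ hadj)
      rw [eo w hwv4 hwv6 hwv7 hwv1] at hcw
      exact ⟨⟨hadj, h34, hwv4⟩, hcw⟩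
    by_cases htv5 : t = v5
    · rw [htv5, eo v5 (Ne.symm h45) h56 h57 (Ne.symm h15), hc53]
      have hv6mem : v6 ∈ {w | H.Adj v5 w ∧ c w = 3} :=
        ⟨⟨a56, Ne.symm h45, Ne.symm h46⟩, hcv6⟩
      refine le_of_subset'
        (T := insert v4 ({w | H.Adj v5 w ∧ c w = 3} \ {v6})) ?_
        (le_trans (ncard_insert_diff_le hv6mem v4) (le_of_eq hs53))
      rintro w ⟨hadj, hcw⟩
      by_cases hwv4 : w = v4
      · rw [hwv4]; exact Set.mem_insert _ _
      · have hwv6 : w ≠ v6 := by intro h; rw [h, e6] at hcw; omega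
        have hwv7 : w ≠ v7 := fun h => n57 (h ▸ hadj)
        have hwv1 : w ≠ v1 := fun h => n51 (h ▸ hadj)
        rw [eo w hwv4 hwv6 hwv7 hwv1] at hcw
        refine Set.mem_insert_of_mem _ ⟨⟨⟨hadj, Ne.symm h45, hwv4⟩, hcw⟩, ?_⟩
        simp [hwv6]
    · by_cases hdt : degN G t ≤ 3
      · exact bound_by_deg3 hc'3 t hdt
      · rw [eo t htv4 htv6 htv7 htv1]
        refine le_of_subset' ?_ (hcnt t)
        rintro w ⟨hadj, hcw⟩
        have hwv4 : w ≠ v4 := by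
          intro h
          rcases hnb4 t (h ▸ hadj).symm with h' | h'
          · exact htv3 h'
          · exact htv5 h'
        have hwv6 : w ≠ v6 := by
          intro h
          rcases hnb6 t ((h ▸ hadj).symm) with h' | h'
          · exact htv5 h'
          · exact htv7 h'
        by_cases hwv7 : w = v7
        · exfalso
          rcases hnb7 t ((hwv7 ▸ hadj).symm) with h' | h'
          · exact htv1 h'
          · omega
        by_cases hwv1 : w = v1
        · exfalso
          rcases hnb1 t ((hwv1 ▸ hadj).symm) with h' | h' | h'
          · exact htv7 h'
          · rw [hwv1, e1] at hcw
            rw [h', hcz1] at hcw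
            omega
          · omega
        · rw [eo w hwv4 hwv6 hwv7 hwv1] at hcw
          exact ⟨⟨hadj, htv4, hwv4⟩, hcw⟩

  · rw [hc53] at hc54; omega

end BigF
section Core
variable {V : Type*} [Fintype V] {G : SimpleGraph V}

lemma poor5 {x : V} (h : Is5p G x) : degN G x ≤ 6 ∧ tpn G x = 1 ∧ 3 ≤ degN G x :=
  ⟨by have := h.1; omega, h.2, by have := h.1; omega⟩

lemma poor6 {x : V} (h : Is6p G x) : degN G x ≤ 6 ∧ tpn G x = 1 ∧ 3 ≤ degN G x :=
  ⟨by have := h.1; omega, h.2, by have := h.1; omega⟩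

lemma noBB (hG : MinNonColorable34 G) {x y : V}
    (hx : Is5p G x ∨ Is6p G x) (hy : Is5p G y ∨ Is6p G y) (h : G.Adj x y) : False := by
  have px := hx.elim poor5 poor6
  have py := hy.elim poor5 poor6
  exact no_poor_poor hG px.1 px.2.1 px.2.2 py.1 py.2.1 py.2.2 h

/-- Core classification of a 7-cycle starting at its unique 5s-vertex. -/
lemma core7 (hG : MinNonColorable34 G) (hgirth : GirthAtLeast5 G)
    (w1 w2 w3 w4 w5 w6 w7 : V)
    (hnd : ([w1, w2, w3, w4, w5, w6, w7] : List V).Nodup)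
    (a12 : G.Adj w1 w2) (a23 : G.Adj w2 w3) (a34 : G.Adj w3 w4)
    (a45 : G.Adj w4 w5) (a56 : G.Adj w5 w6) (a67 : G.Adj w6 w7)
    (a71 : G.Adj w7 w1)
    (h1 : Is5s G w1)
    (L2 : degN G w2 = 2 ∨ Is5p G w2 ∨ Is6p G w2)
    (L3 : degN G w3 = 2 ∨ Is5p G w3 ∨ Is6p G w3)
    (L4 : degN G w4 = 2 ∨ Is5p G w4 ∨ Is6p G w4)
    (L5 : degN G w5 = 2 ∨ Is5p G w5 ∨ Is6p G w5)
    (L6 : degN G w6 = 2 ∨ Is5p G w6 ∨ Is6p G w6)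
    (L7 : degN G w7 = 2 ∨ Is5p G w7 ∨ Is6p G w7) :
    (degN G w2 = 2 ∧ Is6p G w3 ∧ degN G w4 = 2 ∧ Is6p G w5 ∧
      degN G w6 = 2 ∧ Is6p G w7) ∨
    (Is6p G w2 ∧ degN G w3 = 2 ∧ Is6p G w4 ∧ degN G w5 = 2 ∧
      Is6p G w6 ∧ degN G w7 = 2) := by
  have hnd' := hnd
  simp only [List.nodup_cons, List.mem_cons, List.not_mem_nil, or_false, not_or,
    List.nodup_nil, and_true, List.mem_singleton] at hnd'
  obtain ⟨⟨h12, h13, h14, h15, h16, h17⟩, ⟨h23, h24, h25, h26, h27⟩,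
    ⟨h34, h35, h36, h37⟩, ⟨h45, h46, h47⟩, ⟨h56, h57⟩, h67, -⟩ := hnd'
  rcases L2 with d2 | p2 | p2
  · -- Branch A : w2 is a 2-vertex
    have hp3 : Is6p G w3 := by
      rcases L3 with d3 | p3 | p3
      · exact (no_low_edge hG (by omega) (by omega) a23).elim
      · exact (no_2_between_deg5 hG hgirth d2 a12.symm a23 h13 h1.1 p3.1).elim
      · exact p3
    have d4 : degN G w4 = 2 := by
      rcases L4 with d4 | p4 | p4
      · exact d4
      · exact (noBB hG (Or.inr hp3) (Or.inl p4) a34).elim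
      · exact (noBB hG (Or.inr hp3) (Or.inr p4) a34).elim
    have pw5 : Is5p G w5 ∨ Is6p G w5 := by
      rcases L5 with d5 | p5 | p5
      · exact (no_low_edge hG (by omega) (by omega) a45).elim
      · exact Or.inl p5
      · exact Or.inr p5
    have d6 : degN G w6 = 2 := by
      rcases L6 with d6 | p6 | p6
      · exact d6
      · exact (noBB hG pw5 (Or.inl p6) a56).elim
      · exact (noBB hG pw5 (Or.inr p6) a56).elim
    have hp7 : Is6p G w7 := by
      rcases L7 with d7 | p7 | p7
      · exact (no_low_edge hG (by omega) (by omega) a67).elim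
      · exact (no_5p_adj_deg5 hG p7.1 p7.2 h1.1 a71).elim
      · exact p7
    rcases pw5 with p5 | p5
    · exact (no_F7_5p hG hgirth w1 w2 w3 w4 w5 w6 w7 hnd a12 a23 a34 a45 a56 a67 a71
        h1 d2 hp3 d4 p5 d6 hp7).elim
    · exact Or.inl ⟨d2, hp3, d4, p5, d6, hp7⟩
  · -- w2 is 5p : impossible, adjacent to the degree-5 vertex w1
    exact (no_5p_adj_deg5 hG p2.1 p2.2 h1.1 a12.symm).elim
  · -- Branch B : w2 is 6p
    have d3 : degN G w3 = 2 := by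
      rcases L3 with d3 | p3 | p3
      · exact d3
      · exact (noBB hG (Or.inr p2) (Or.inl p3) a23).elim
      · exact (noBB hG (Or.inr p2) (Or.inr p3) a23).elim
    have pw4 : Is5p G w4 ∨ Is6p G w4 := by
      rcases L4 with d4 | p4 | p4
      · exact (no_low_edge hG (by omega) (by omega) a34).elim
      · exact Or.inl p4
      · exact Or.inr p4
    have d5 : degN G w5 = 2 := by
      rcases L5 with d5 | p5 | p5
      · exact d5
      · exact (noBB hG pw4 (Or.inl p5) a45).elim
      · exact (noBB hG pw4 (Or.inr p5) a45).elim
    have pw6 : Is5p G w6 ∨ Is6p G w6 := by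
      rcases L6 with d6 | p6 | p6
      · exact (no_low_edge hG (by omega) (by omega) a56).elim
      · exact Or.inl p6
      · exact Or.inr p6
    have d7 : degN G w7 = 2 := by
      rcases L7 with d7 | p7 | p7
      · exact d7
      · exact (noBB hG pw6 (Or.inl p7) a67).elim
      · exact (noBB hG pw6 (Or.inr p7) a67).elim
    have hp6 : Is6p G w6 := by
      rcases pw6 with p6 | p6
      · exact (no_2_between_deg5 hG hgirth d7 a67.symm a71 (fun h => h16 h.symm)
          p6.1 h1.1).elim
      · exact p6
    have hp4 : Is6p G w4 := by
      rcases pw4 with p4 | p4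
      · -- reversed F7 configuration
        have hndrev : ([w1, w7, w6, w5, w4, w3, w2] : List V).Nodup := by
          have h1' : ([w1, w2, w3, w4, w5, w6, w7] : List V).reverse.Nodup :=
            List.nodup_reverse.mpr hnd
          have h2' : (([w1, w2, w3, w4, w5, w6, w7] : List V).reverse).IsRotated
              [w1, w7, w6, w5, w4, w3, w2] := ⟨6, rfl⟩
          exact h2'.nodup_iff.mp h1'
        exact (no_F7_5p hG hgirth w1 w7 w6 w5 w4 w3 w2 hndrev a71.symm a67.symm
          a56.symm a45.symm a34.symm a23.symm a12.symm
          h1 d7 hp6 d5 p4 d3 p2).elim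
      · exact p4
    exact Or.inr ⟨p2, d3, hp4, d5, hp6, d7⟩

end Core

/-- In a minimally non-(3,4)-colorable graph of girth at least 5,
every 7-cycle `u₁…u₇` satisfies at least one of: (a) at most six of its vertices
are 2-, 5p-, 5s-, or 6p-vertices; (b) at least two of its vertices are
5s-vertices; (c) up to rotation or reflection, position 1 is a 5s-vertex,
positions 2, 4, 6 are 2-vertices, and positions 3, 5, 7 are 6p-vertices (the
special face `F₇`). -/
theorem stmt_19 {V : Type*} [Fintype V] (G : SimpleGraph V)
    (hG : MinNonColorable34 G) (hgirth : GirthAtLeast5 G)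
    (u1 u2 u3 u4 u5 u6 u7 : V)
    (hnd : ([u1, u2, u3, u4, u5, u6, u7] : List V).Nodup)
    (a12 : G.Adj u1 u2) (a23 : G.Adj u2 u3) (a34 : G.Adj u3 u4)
    (a45 : G.Adj u4 u5) (a56 : G.Adj u5 u6) (a67 : G.Adj u6 u7)
    (a71 : G.Adj u7 u1) :
    {x ∈ ({u1, u2, u3, u4, u5, u6, u7} : Set V) |
        degN G x = 2 ∨ Is5p G x ∨ Is5s G x ∨ Is6p G x}.ncard ≤ 6 ∨
      2 ≤ {x ∈ ({u1, u2, u3, u4, u5, u6, u7} : Set V) | Is5s G x}.ncard ∨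
      ∃ v1 v2 v3 v4 v5 v6 v7 : V,
        (([v1, v2, v3, v4, v5, v6, v7] : List V).IsRotated
            [u1, u2, u3, u4, u5, u6, u7] ∨
          ([v1, v2, v3, v4, v5, v6, v7] : List V).IsRotated
            ([u1, u2, u3, u4, u5, u6, u7] : List V).reverse) ∧
        Is5s G v1 ∧ degN G v2 = 2 ∧ degN G v4 = 2 ∧ degN G v6 = 2 ∧
        Is6p G v3 ∧ Is6p G v5 ∧ Is6p G v7 := by
  classical
  by_cases hA : ({x ∈ ({u1, u2, u3, u4, u5, u6, u7} : Set V) |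
      degN G x = 2 ∨ Is5p G x ∨ Is5s G x ∨ Is6p G x}.ncard ≤ 6)
  · exact Or.inl hA
  by_cases hB : 2 ≤ {x ∈ ({u1, u2, u3, u4, u5, u6, u7} : Set V) | Is5s G x}.ncard
  · exact Or.inr (Or.inl hB)
  have hnd' := hnd
  simp only [List.nodup_cons, List.mem_cons, List.not_mem_nil, or_false, not_or,
    List.nodup_nil, and_true, List.mem_singleton] at hnd'
  obtain ⟨⟨h12, h13, h14, h15, h16, h17⟩, ⟨h23, h24, h25, h26, h27⟩,
    ⟨h34, h35, h36, h37⟩, ⟨h45, h46, h47⟩, ⟨h56, h57⟩, h67, -⟩ := hnd'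
  have hS7 : ({u1, u2, u3, u4, u5, u6, u7} : Set V).ncard ≤ 7 := by
    have c1 := Set.ncard_insert_le u1 ({u2, u3, u4, u5, u6, u7} : Set V)
    have c2 := Set.ncard_insert_le u2 ({u3, u4, u5, u6, u7} : Set V)
    have c3 := Set.ncard_insert_le u3 ({u4, u5, u6, u7} : Set V)
    have c4 := Set.ncard_insert_le u4 ({u5, u6, u7} : Set V)
    have c5 := Set.ncard_insert_le u5 ({u6, u7} : Set V)
    have c6 := Set.ncard_insert_le u6 ({u7} : Set V)
    have c7 : ({u7} : Set V).ncard = 1 := Set.ncard_singleton u7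
    omega
  have hlight : ∀ x ∈ ({u1, u2, u3, u4, u5, u6, u7} : Set V),
      degN G x = 2 ∨ Is5p G x ∨ Is5s G x ∨ Is6p G x := by
    intro x hx
    by_contra hPx
    apply hA
    have hsub : {y ∈ ({u1, u2, u3, u4, u5, u6, u7} : Set V) |
        degN G y = 2 ∨ Is5p G y ∨ Is5s G y ∨ Is6p G y} ⊆
        ({u1, u2, u3, u4, u5, u6, u7} : Set V) \ {x} := by
      rintro y ⟨hy, hPy⟩
      refine ⟨hy, fun hyx => ?_⟩
      rw [Set.mem_singleton_iff] at hyx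
      exact hPx (hyx ▸ hPy)
    have hd := Set.ncard_diff_singleton_of_mem hx
    have hle := Set.ncard_le_ncard hsub (Set.toFinite _)
    omega
  have h5two : ∀ x y : V, x ∈ ({u1, u2, u3, u4, u5, u6, u7} : Set V) →
      y ∈ ({u1, u2, u3, u4, u5, u6, u7} : Set V) → x ≠ y →
      Is5s G x → Is5s G y → False := by
    intro x y hx hy hxy h5x h5y
    apply hB
    have hsub : ({x, y} : Set V) ⊆
        {z ∈ ({u1, u2, u3, u4, u5, u6, u7} : Set V) | Is5s G z} := by
      rintro z (rfl | hz)
      · exact ⟨hx, h5x⟩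
      · rw [Set.mem_singleton_iff] at hz
        exact ⟨hz ▸ hy, hz ▸ h5y⟩
    have hle := Set.ncard_le_ncard hsub (Set.toFinite _)
    rw [Set.ncard_pair hxy] at hle
    exact hle
  have m1 : u1 ∈ ({u1, u2, u3, u4, u5, u6, u7} : Set V) := by simp
  have m2 : u2 ∈ ({u1, u2, u3, u4, u5, u6, u7} : Set V) := by simp
  have m3 : u3 ∈ ({u1, u2, u3, u4, u5, u6, u7} : Set V) := by simp
  have m4 : u4 ∈ ({u1, u2, u3, u4, u5, u6, u7} : Set V) := by simp
  have m5 : u5 ∈ ({u1, u2, u3, u4, u5, u6, u7} : Set V) := by simp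
  have m6 : u6 ∈ ({u1, u2, u3, u4, u5, u6, u7} : Set V) := by simp
  have m7 : u7 ∈ ({u1, u2, u3, u4, u5, u6, u7} : Set V) := by simp
  have mkL : ∀ s x : V, Is5s G s → x ∈ ({u1, u2, u3, u4, u5, u6, u7} : Set V) →
      s ∈ ({u1, u2, u3, u4, u5, u6, u7} : Set V) → s ≠ x →
      degN G x = 2 ∨ Is5p G x ∨ Is6p G x := by
    intro s x h5 hx hs hne
    rcases hlight x hx with h | h | h | h
    · exact Or.inl h
    · exact Or.inr (Or.inl h)
    · exact (h5two s x hs hx hne h5 h).elim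
    · exact Or.inr (Or.inr h)
  have step : ∀ x y : V, G.Adj x y →
      (degN G x = 2 ∨ Is5p G x ∨ Is6p G x) →
      (degN G y = 2 ∨ Is5p G y ∨ Is6p G y) →
      (degN G x = 2 ↔ ¬ degN G y = 2) := by
    intro x y hxy hx hy
    constructor
    · intro h2x h2y
      exact no_low_edge hG (by omega) (by omega) hxy
    · intro hn2
      rcases hx with h | h | h
      · exact h
      · exfalso
        rcases hy with h' | h' | h'
        · exact hn2 h'
        · exact noBB hG (Or.inl h) (Or.inl h') hxy
        · exact noBB hG (Or.inl h) (Or.inr h') hxy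
      · exfalso
        rcases hy with h' | h' | h'
        · exact hn2 h'
        · exact noBB hG (Or.inr h) (Or.inl h') hxy
        · exact noBB hG (Or.inr h) (Or.inr h') hxy
  by_cases hs1 : Is5s G u1
  · have hndr : ([u1, u2, u3, u4, u5, u6, u7] : List V).Nodup :=
      (List.IsRotated.nodup_iff ⟨0, rfl⟩).mp hnd
    rcases core7 hG hgirth u1 u2 u3 u4 u5 u6 u7 hndr a12 a23 a34 a45 a56 a67 a71 hs1
        (mkL u1 u2 hs1 m2 m1 h12) (mkL u1 u3 hs1 m3 m1 h13) (mkL u1 u4 hs1 m4 m1 h14) (mkL u1 u5 hs1 m5 m1 h15) (mkL u1 u6 hs1 m6 m1 h16) (mkL u1 u7 hs1 m7 m1 h17) with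
      ⟨d2, p3, d4, p5, d6, p7⟩ | ⟨p2, d3, p4, d5, p6, d7⟩
    · exact Or.inr (Or.inr ⟨u1, u2, u3, u4, u5, u6, u7, Or.inl ⟨0, rfl⟩, hs1, d2, d4, d6, p3, p5, p7⟩)
    · exact Or.inr (Or.inr ⟨u1, u7, u6, u5, u4, u3, u2, Or.inr ⟨1, rfl⟩, hs1, d7, d5, d3, p6, p4, p2⟩)
  by_cases hs2 : Is5s G u2
  · have hndr : ([u2, u3, u4, u5, u6, u7, u1] : List V).Nodup :=
      (List.IsRotated.nodup_iff ⟨1, rfl⟩).mp hnd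
    rcases core7 hG hgirth u2 u3 u4 u5 u6 u7 u1 hndr a23 a34 a45 a56 a67 a71 a12 hs2
        (mkL u2 u3 hs2 m3 m2 h23) (mkL u2 u4 hs2 m4 m2 h24) (mkL u2 u5 hs2 m5 m2 h25) (mkL u2 u6 hs2 m6 m2 h26) (mkL u2 u7 hs2 m7 m2 h27) (mkL u2 u1 hs2 m1 m2 (Ne.symm h12)) with
      ⟨d2, p3, d4, p5, d6, p7⟩ | ⟨p2, d3, p4, d5, p6, d7⟩
    · exact Or.inr (Or.inr ⟨u2, u3, u4, u5, u6, u7, u1, Or.inl ⟨6, rfl⟩, hs2, d2, d4, d6, p3, p5, p7⟩)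
    · exact Or.inr (Or.inr ⟨u2, u1, u7, u6, u5, u4, u3, Or.inr ⟨2, rfl⟩, hs2, d7, d5, d3, p6, p4, p2⟩)
  by_cases hs3 : Is5s G u3
  · have hndr : ([u3, u4, u5, u6, u7, u1, u2] : List V).Nodup :=
      (List.IsRotated.nodup_iff ⟨2, rfl⟩).mp hnd
    rcases core7 hG hgirth u3 u4 u5 u6 u7 u1 u2 hndr a34 a45 a56 a67 a71 a12 a23 hs3
        (mkL u3 u4 hs3 m4 m3 h34) (mkL u3 u5 hs3 m5 m3 h35) (mkL u3 u6 hs3 m6 m3 h36) (mkL u3 u7 hs3 m7 m3 h37) (mkL u3 u1 hs3 m1 m3 (Ne.symm h13)) (mkL u3 u2 hs3 m2 m3 (Ne.symm h23)) with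
      ⟨d2, p3, d4, p5, d6, p7⟩ | ⟨p2, d3, p4, d5, p6, d7⟩
    · exact Or.inr (Or.inr ⟨u3, u4, u5, u6, u7, u1, u2, Or.inl ⟨5, rfl⟩, hs3, d2, d4, d6, p3, p5, p7⟩)
    · exact Or.inr (Or.inr ⟨u3, u2, u1, u7, u6, u5, u4, Or.inr ⟨3, rfl⟩, hs3, d7, d5, d3, p6, p4, p2⟩)
  by_cases hs4 : Is5s G u4
  · have hndr : ([u4, u5, u6, u7, u1, u2, u3] : List V).Nodup :=
      (List.IsRotated.nodup_iff ⟨3, rfl⟩).mp hnd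
    rcases core7 hG hgirth u4 u5 u6 u7 u1 u2 u3 hndr a45 a56 a67 a71 a12 a23 a34 hs4
        (mkL u4 u5 hs4 m5 m4 h45) (mkL u4 u6 hs4 m6 m4 h46) (mkL u4 u7 hs4 m7 m4 h47) (mkL u4 u1 hs4 m1 m4 (Ne.symm h14)) (mkL u4 u2 hs4 m2 m4 (Ne.symm h24)) (mkL u4 u3 hs4 m3 m4 (Ne.symm h34)) with
      ⟨d2, p3, d4, p5, d6, p7⟩ | ⟨p2, d3, p4, d5, p6, d7⟩
    · exact Or.inr (Or.inr ⟨u4, u5, u6, u7, u1, u2, u3, Or.inl ⟨4, rfl⟩, hs4, d2, d4, d6, p3, p5, p7⟩)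
    · exact Or.inr (Or.inr ⟨u4, u3, u2, u1, u7, u6, u5, Or.inr ⟨4, rfl⟩, hs4, d7, d5, d3, p6, p4, p2⟩)
  by_cases hs5 : Is5s G u5
  · have hndr : ([u5, u6, u7, u1, u2, u3, u4] : List V).Nodup :=
      (List.IsRotated.nodup_iff ⟨4, rfl⟩).mp hnd
    rcases core7 hG hgirth u5 u6 u7 u1 u2 u3 u4 hndr a56 a67 a71 a12 a23 a34 a45 hs5
        (mkL u5 u6 hs5 m6 m5 h56) (mkL u5 u7 hs5 m7 m5 h57) (mkL u5 u1 hs5 m1 m5 (Ne.symm h15)) (mkL u5 u2 hs5 m2 m5 (Ne.symm h25)) (mkL u5 u3 hs5 m3 m5 (Ne.symm h35)) (mkL u5 u4 hs5 m4 m5 (Ne.symm h45)) with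
      ⟨d2, p3, d4, p5, d6, p7⟩ | ⟨p2, d3, p4, d5, p6, d7⟩
    · exact Or.inr (Or.inr ⟨u5, u6, u7, u1, u2, u3, u4, Or.inl ⟨3, rfl⟩, hs5, d2, d4, d6, p3, p5, p7⟩)
    · exact Or.inr (Or.inr ⟨u5, u4, u3, u2, u1, u7, u6, Or.inr ⟨5, rfl⟩, hs5, d7, d5, d3, p6, p4, p2⟩)
  by_cases hs6 : Is5s G u6
  · have hndr : ([u6, u7, u1, u2, u3, u4, u5] : List V).Nodup :=
      (List.IsRotated.nodup_iff ⟨5, rfl⟩).mp hnd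
    rcases core7 hG hgirth u6 u7 u1 u2 u3 u4 u5 hndr a67 a71 a12 a23 a34 a45 a56 hs6
        (mkL u6 u7 hs6 m7 m6 h67) (mkL u6 u1 hs6 m1 m6 (Ne.symm h16)) (mkL u6 u2 hs6 m2 m6 (Ne.symm h26)) (mkL u6 u3 hs6 m3 m6 (Ne.symm h36)) (mkL u6 u4 hs6 m4 m6 (Ne.symm h46)) (mkL u6 u5 hs6 m5 m6 (Ne.symm h56)) with
      ⟨d2, p3, d4, p5, d6, p7⟩ | ⟨p2, d3, p4, d5, p6, d7⟩
    · exact Or.inr (Or.inr ⟨u6, u7, u1, u2, u3, u4, u5, Or.inl ⟨2, rfl⟩, hs6, d2, d4, d6, p3, p5, p7⟩)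
    · exact Or.inr (Or.inr ⟨u6, u5, u4, u3, u2, u1, u7, Or.inr ⟨6, rfl⟩, hs6, d7, d5, d3, p6, p4, p2⟩)
  by_cases hs7 : Is5s G u7
  · have hndr : ([u7, u1, u2, u3, u4, u5, u6] : List V).Nodup :=
      (List.IsRotated.nodup_iff ⟨6, rfl⟩).mp hnd
    rcases core7 hG hgirth u7 u1 u2 u3 u4 u5 u6 hndr a71 a12 a23 a34 a45 a56 a67 hs7
        (mkL u7 u1 hs7 m1 m7 (Ne.symm h17)) (mkL u7 u2 hs7 m2 m7 (Ne.symm h27)) (mkL u7 u3 hs7 m3 m7 (Ne.symm h37)) (mkL u7 u4 hs7 m4 m7 (Ne.symm h47)) (mkL u7 u5 hs7 m5 m7 (Ne.symm h57)) (mkL u7 u6 hs7 m6 m7 (Ne.symm h67)) with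
      ⟨d2, p3, d4, p5, d6, p7⟩ | ⟨p2, d3, p4, d5, p6, d7⟩
    · exact Or.inr (Or.inr ⟨u7, u1, u2, u3, u4, u5, u6, Or.inl ⟨1, rfl⟩, hs7, d2, d4, d6, p3, p5, p7⟩)
    · exact Or.inr (Or.inr ⟨u7, u6, u5, u4, u3, u2, u1, Or.inr ⟨0, rfl⟩, hs7, d7, d5, d3, p6, p4, p2⟩)
  · exfalso
    have l1 : degN G u1 = 2 ∨ Is5p G u1 ∨ Is6p G u1 := by
      rcases hlight u1 m1 with h | h | h | h
      · exact Or.inl h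
      · exact Or.inr (Or.inl h)
      · exact absurd h hs1
      · exact Or.inr (Or.inr h)
    have l2 : degN G u2 = 2 ∨ Is5p G u2 ∨ Is6p G u2 := by
      rcases hlight u2 m2 with h | h | h | h
      · exact Or.inl h
      · exact Or.inr (Or.inl h)
      · exact absurd h hs2
      · exact Or.inr (Or.inr h)
    have l3 : degN G u3 = 2 ∨ Is5p G u3 ∨ Is6p G u3 := by
      rcases hlight u3 m3 with h | h | h | h
      · exact Or.inl h
      · exact Or.inr (Or.inl h)
      · exact absurd h hs3
      · exact Or.inr (Or.inr h)
    have l4 : degN G u4 = 2 ∨ Is5p G u4 ∨ Is6p G u4 := by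
      rcases hlight u4 m4 with h | h | h | h
      · exact Or.inl h
      · exact Or.inr (Or.inl h)
      · exact absurd h hs4
      · exact Or.inr (Or.inr h)
    have l5 : degN G u5 = 2 ∨ Is5p G u5 ∨ Is6p G u5 := by
      rcases hlight u5 m5 with h | h | h | h
      · exact Or.inl h
      · exact Or.inr (Or.inl h)
      · exact absurd h hs5
      · exact Or.inr (Or.inr h)
    have l6 : degN G u6 = 2 ∨ Is5p G u6 ∨ Is6p G u6 := by
      rcases hlight u6 m6 with h | h | h | h
      · exact Or.inl h
      · exact Or.inr (Or.inl h)
      · exact absurd h hs6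
      · exact Or.inr (Or.inr h)
    have l7 : degN G u7 = 2 ∨ Is5p G u7 ∨ Is6p G u7 := by
      rcases hlight u7 m7 with h | h | h | h
      · exact Or.inl h
      · exact Or.inr (Or.inl h)
      · exact absurd h hs7
      · exact Or.inr (Or.inr h)
    have e1 := step u1 u2 a12 l1 l2
    have e2 := step u2 u3 a23 l2 l3
    have e3 := step u3 u4 a34 l3 l4
    have e4 := step u4 u5 a45 l4 l5
    have e5 := step u5 u6 a56 l5 l6
    have e6 := step u6 u7 a67 l6 l7
    have e7 := step u7 u1 a71 l7 l1
    by_cases b1 : degN G u1 = 2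
    · have b2 : ¬ degN G u2 = 2 := e1.mp b1
      have b3 : degN G u3 = 2 := by by_contra h; exact b2 (e2.mpr h)
      have b4 : ¬ degN G u4 = 2 := e3.mp b3
      have b5 : degN G u5 = 2 := by by_contra h; exact b4 (e4.mpr h)
      have b6 : ¬ degN G u6 = 2 := e5.mp b5
      have b7 : degN G u7 = 2 := by by_contra h; exact b6 (e6.mpr h)
      exact (e7.mp b7) b1
    · have b2 : degN G u2 = 2 := by by_contra h; exact b1 (e1.mpr h)
      have b3 : ¬ degN G u3 = 2 := e2.mp b2
      have b4 : degN G u4 = 2 := by by_contra h; exact b3 (e3.mpr h)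
      have b5 : ¬ degN G u5 = 2 := e4.mp b4
      have b6 : degN G u6 = 2 := by by_contra h; exact b5 (e5.mpr h)
      have b7 : ¬ degN G u7 = 2 := e6.mp b6
      have b1' : degN G u1 = 2 := by by_contra h; exact b7 (e7.mpr h)
      exact b1 b1'
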